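/- arXiv:1706.03617 — 5 statements merged into one kernel-verified Lean document; each statement's English description precedes it below -/
import Mathlib

section
/- For every positive integer n that is not a perfect square, the number of overpartitions of n satisfies p̄(n) ≡ 0 (mod 4). -/
open PowerSeries Finset

section Aux
variable {R : Type*} [CommRing R]

noncomputable def Tser (k : ℕ) : PowerSeries R :=
  PowerSeries.mk fun m => if k ∣ m ∧ 1 ≤ m then 1 else 0

lemma const_one {k : ℕ} (hk : 1 ≤ k) :
    constantCoeff (R := R) (1 - (X : R⟦X⟧) ^ k) = 1 := by
  simp [map_sub, map_pow, constantCoeff_X, zero_pow (by omega : k ≠ 0)]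

lemma one_sub_mul_inv {k : ℕ} (hk : 1 ≤ k) :
    (1 - (X : R⟦X⟧) ^ k) * invOfUnit (1 - X ^ k) 1 = 1 :=
  mul_invOfUnit _ 1 (by simpa using const_one (R := R) hk)

lemma invUniqueAux {k : ℕ} (hk : 1 ≤ k) {J : R⟦X⟧}
    (hJ : (1 - X ^ k) * J = 1) : J = invOfUnit (1 - X ^ k) 1 := by
  calc J = ((1 - X ^ k) * invOfUnit (1 - X ^ k) 1) * J := by
        rw [one_sub_mul_inv hk, one_mul]
    _ = ((1 - X ^ k) * J) * invOfUnit (1 - X ^ k) 1 := by ring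
    _ = invOfUnit (1 - X ^ k) 1 := by rw [hJ, one_mul]

lemma Tser_mul {k : ℕ} (hk : 1 ≤ k) :
    (Tser k : R⟦X⟧) * (1 - X ^ k) = X ^ k := by
  ext n
  rw [mul_sub, mul_one, map_sub, coeff_mul_X_pow', coeff_X_pow]
  simp only [Tser, coeff_mk]
  rcases lt_trichotomy n k with h | h | h
  · rw [if_neg (by rintro ⟨hd, hn⟩; exact absurd (Nat.le_of_dvd (by omega) hd) (by omega)),
      if_neg (by omega), if_neg (by omega), sub_zero]
  · subst h
    rw [if_pos ⟨dvd_rfl, hk⟩, if_pos le_rfl, if_neg (by simp), if_pos rfl, sub_zero]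
  · have h2 : (k ∣ n ∧ 1 ≤ n) ↔ (k ∣ n - k ∧ 1 ≤ n - k) := by
      constructor
      · rintro ⟨hd, _⟩
        refine ⟨Nat.dvd_sub hd dvd_rfl, ?_⟩
        rcases hd with ⟨c, rfl⟩
        have hc2 : 1 < c := Nat.lt_of_mul_lt_mul_left (a := k) (by simpa using h)
        have h3 : k * 2 ≤ k * c := Nat.mul_le_mul_left k hc2
        omega
      · rintro ⟨hd, _⟩
        refine ⟨?_, by omega⟩
        have hn : n = (n - k) + k := by omega
        rw [hn]; exact Nat.dvd_add hd dvd_rfl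
    rw [if_pos (by omega : k ≤ n), if_neg (by omega : ¬ n = k)]
    by_cases hc : k ∣ n ∧ 1 ≤ n
    · rw [if_pos hc, if_pos (h2.mp hc), sub_self]
    · rw [if_neg hc, if_neg (fun a => hc (h2.mpr a)), sub_zero]

lemma Xpow_mul_inv {k : ℕ} (hk : 1 ≤ k) :
    (X : R⟦X⟧) ^ k * invOfUnit (1 - X ^ k) 1 = Tser k := by
  calc (X : R⟦X⟧) ^ k * invOfUnit (1 - X ^ k) 1
      = (Tser k * (1 - X ^ k)) * invOfUnit (1 - X ^ k) 1 := by rw [Tser_mul hk]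
    _ = Tser k * ((1 - X ^ k) * invOfUnit (1 - X ^ k) 1) := by ring
    _ = Tser k := by rw [one_sub_mul_inv hk, mul_one]

lemma prod_one_add_two (h4 : (2 : R⟦X⟧) * 2 = 0) (s : Finset ℕ) (f : ℕ → R⟦X⟧) :
    ∏ k ∈ s, (1 + 2 * f k) = 1 + 2 * ∑ k ∈ s, f k := by
  induction s using Finset.induction with
  | empty => simp
  | @insert x s hx ih =>
      rw [prod_insert hx, ih, sum_insert hx]
      linear_combination (f x * ∑ k ∈ s, f k) * h4

end Aux

/-- The formal power series `(1+q^k)/(1-q^k)` in `ℤ⟦q⟧`. -/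
noncomputable def fps (k : ℕ) : PowerSeries ℤ :=
  (1 + (PowerSeries.X : PowerSeries ℤ) ^ k) *
    PowerSeries.invOfUnit (1 - (PowerSeries.X : PowerSeries ℤ) ^ k) 1

/-- The number of overpartitions of `n`: the coefficient of `q^n` in
`∏_{k≥1} (1+q^k)/(1-q^k)`.  Since each factor with `k > n` contributes only `1`
to coefficients up to degree `n`, the product may be truncated at `k = n`. -/
noncomputable def pbar (n : ℕ) : ℤ :=
  PowerSeries.coeff (R := ℤ) n (∏ k ∈ Finset.Icc 1 n, fps k)

lemma map_fps {k : ℕ} (hk : 1 ≤ k) :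
    PowerSeries.map (Int.castRingHom (ZMod 4)) (fps k) = 1 + 2 * Tser k := by
  have hmap : PowerSeries.map (Int.castRingHom (ZMod 4)) (1 - X ^ k : ℤ⟦X⟧)
      = 1 - X ^ k := by simp
  have hJ : (1 - (X : (ZMod 4)⟦X⟧) ^ k) *
      PowerSeries.map (Int.castRingHom (ZMod 4)) (invOfUnit (1 - X ^ k : ℤ⟦X⟧) 1) = 1 := by
    rw [← hmap, ← map_mul, one_sub_mul_inv hk, map_one]
  have hinv := invUniqueAux hk hJ
  rw [fps, map_mul, hinv]
  have h1 : PowerSeries.map (Int.castRingHom (ZMod 4)) (1 + X ^ k : ℤ⟦X⟧)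
      = 1 + X ^ k := by simp
  rw [h1]
  have h2 : (1 + (X : (ZMod 4)⟦X⟧) ^ k) = (1 - X ^ k) + 2 * X ^ k := by ring
  rw [h2, add_mul, one_sub_mul_inv hk, mul_assoc, Xpow_mul_inv hk]

lemma even_card_divisors {n : ℕ} (hn : 1 ≤ n) (hsq : ¬ IsSquare n) :
    Even n.divisors.card := by
  by_contra hodd
  rw [Nat.not_even_iff_odd] at hodd
  rw [Nat.card_divisors (by omega : n ≠ 0)] at hodd
  have heven : ∀ p ∈ n.primeFactors, Even (n.factorization p) := by
    intro p hp
    by_contra hep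
    rw [Nat.not_even_iff_odd] at hep
    have h2 : 2 ∣ (n.factorization p + 1) := by
      obtain ⟨m, hm⟩ := hep; omega
    have h3 := h2.trans (Finset.dvd_prod_of_mem (n.factorization · + 1) hp)
    obtain ⟨c, hc⟩ := h3
    rw [Nat.odd_iff, hc] at hodd
    omega
  apply hsq
  refine ⟨∏ p ∈ n.primeFactors, p ^ (n.factorization p / 2), ?_⟩
  have hprod : ∏ p ∈ n.primeFactors, p ^ (n.factorization p) = n := by
    rw [← Nat.support_factorization]
    exact Nat.factorization_prod_pow_eq_self (by omega : n ≠ 0)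
  calc n = ∏ p ∈ n.primeFactors, p ^ (n.factorization p) := hprod.symm
    _ = ∏ p ∈ n.primeFactors, (p ^ (n.factorization p / 2) * p ^ (n.factorization p / 2)) := by
        refine Finset.prod_congr rfl fun p hp => ?_
        obtain ⟨c, hc⟩ := heven p hp
        rw [← pow_add]
        congr 1
        omega
    _ = _ := Finset.prod_mul_distrib

/-- For every positive nonsquare integer `n`, `p̄(n) ≡ 0 (mod 4)`. -/
theorem pbar_nonsquare_mod_four (n : ℕ) (hn : 1 ≤ n) (hsq : ¬ IsSquare n) :
    pbar n ≡ 0 [ZMOD 4] := by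
  have key : ((pbar n : ℤ) : ZMod 4) = 0 := by
    have h0 : ((pbar n : ℤ) : ZMod 4)
        = PowerSeries.coeff (R := ZMod 4) n
          (PowerSeries.map (Int.castRingHom (ZMod 4)) (∏ k ∈ Finset.Icc 1 n, fps k)) := by
      rw [PowerSeries.coeff_map]; rfl
    have h4 : (2 : (ZMod 4)⟦X⟧) * 2 = 0 := by
      have h42 : (2 : (ZMod 4)⟦X⟧) * 2 = (C (R := ZMod 4)) 4 := by
        rw [map_ofNat]; norm_num
      rw [h42, show ((4 : ZMod 4) = 0) by decide, map_zero]
    have hmapprod : PowerSeries.map (Int.castRingHom (ZMod 4)) (∏ k ∈ Finset.Icc 1 n, fps k)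
        = ∏ k ∈ Finset.Icc 1 n, (1 + 2 * Tser k) := by
      rw [map_prod]
      exact Finset.prod_congr rfl fun k hk => map_fps (Finset.mem_Icc.mp hk).1
    rw [h0, hmapprod, prod_one_add_two h4, map_add, two_mul, map_add]
    have hc1 : (PowerSeries.coeff (R := ZMod 4) n) 1 = 0 := by
      rw [PowerSeries.coeff_one, if_neg (by omega)]
    have hcsum : (PowerSeries.coeff (R := ZMod 4) n) (∑ k ∈ Finset.Icc 1 n, Tser k)
        = (n.divisors.card : ZMod 4) := by
      rw [map_sum]
      have : ∀ k ∈ Finset.Icc 1 n, (PowerSeries.coeff (R := ZMod 4) n) (Tser k)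
          = if k ∣ n then 1 else 0 := by
        intro k hk
        simp only [Tser, coeff_mk]
        congr 1
        simp [hn]
      rw [Finset.sum_congr rfl this, Finset.sum_boole]
      have hset : Finset.filter (fun k => k ∣ n) (Finset.Icc 1 n) = n.divisors := by
        ext d
        simp only [Finset.mem_filter, Finset.mem_Icc, Nat.mem_divisors]
        constructor
        · rintro ⟨⟨h1, h2⟩, hd⟩; exact ⟨hd, by omega⟩
        · rintro ⟨hd, _⟩
          exact ⟨⟨Nat.pos_of_dvd_of_pos hd (by omega), Nat.le_of_dvd (by omega) hd⟩, hd⟩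
      rw [hset]
    rw [hc1, hcsum]
    obtain ⟨c, hc⟩ := even_card_divisors hn hsq
    rw [hc]
    push_cast
    have h40 : (4 : ZMod 4) = 0 := by decide
    linear_combination (c : ZMod 4) * h40
  have := (ZMod.intCast_zmod_eq_zero_iff_dvd (pbar n) 4).mp key
  exact (Int.modEq_iff_dvd.mpr (by simpa using this)).symm
end

section
/- For every odd positive integer n that is not a perfect square, the number of overpartitions of n satisfies p̄(n) ≡ 0 (mod 8). -/
open PowerSeries

section Aux

open Finset


noncomputable def gg (k : ℕ) : PowerSeries ℤ :=
  PowerSeries.mk fun m => if 0 < m ∧ k ∣ m then 1 else 0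

lemma coeff_two_mul (m : ℕ) (φ : PowerSeries ℤ) :
    PowerSeries.coeff (R := ℤ) m (2 * φ) = 2 * PowerSeries.coeff (R := ℤ) m φ := by
  rw [two_mul, map_add, two_mul]

lemma key (k : ℕ) (hk : 1 ≤ k) :
    (1 - (PowerSeries.X : PowerSeries ℤ) ^ k) * (1 + 2 * gg k) = 1 + X ^ k := by
  ext m
  rw [sub_mul, one_mul]
  simp only [map_sub, map_add, PowerSeries.coeff_one, coeff_X_pow_mul',
    coeff_two_mul, coeff_X_pow, gg, coeff_mk]
  rcases Nat.eq_zero_or_pos m with rfl | hm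
  · simp; omega
  · have hm0 : ¬ (m = 0) := by omega
    rcases eq_or_ne m k with rfl | hne
    · simp [hm0, hm]
    · simp only [hm0, if_false, hne, if_false, add_zero, zero_add]
      by_cases hle : k ≤ m
      · simp only [hle, if_true]
        by_cases hdvd : k ∣ m
        · have h1 : ¬ (m - k = 0) := by
            intro h; exact hne (by omega)
          have h2 : k ∣ m - k := (Nat.dvd_sub hdvd dvd_rfl)
          have h4 : k < m := lt_of_le_of_ne hle (Ne.symm hne)
          simp [hm, hdvd, h1, h2, h4]
        · have h2 : ¬ (k ∣ m - k) := fun h => hdvd (by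
            have := Nat.dvd_add h (dvd_refl k)
            rwa [Nat.sub_add_cancel hle] at this)
          have h3 : ¬ (m - k = 0) := fun h => hne (by omega)
          simp [hm, hdvd, h2, h3]
      · simp only [hle, if_false]
        have : ¬ k ∣ m := fun h => hle (Nat.le_of_dvd hm h)
        simp [hm, this]

noncomputable def SS (s : Finset ℕ) : PowerSeries ℤ := ∑ k ∈ s, gg k

noncomputable def PP (s : Finset ℕ) : PowerSeries ℤ :=
  ∑ k ∈ s, ∑ l ∈ s.filter (fun l => k < l), gg k * gg l

lemma PP_insert (a : ℕ) (s : Finset ℕ) (ha : a ∉ s) :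
    PP (insert a s) = PP s + gg a * SS s := by
  classical
  rw [PP, Finset.sum_insert ha]
  have h1 : ∑ l ∈ (insert a s).filter (fun l => a < l), gg a * gg l
      = ∑ l ∈ s.filter (fun l => a < l), gg a * gg l := by
    rw [Finset.filter_insert]
    simp [lt_irrefl]
  have h2 : ∀ k ∈ s, ∑ l ∈ (insert a s).filter (fun l => k < l), gg k * gg l
      = (if k < a then gg k * gg a else 0) + ∑ l ∈ s.filter (fun l => k < l), gg k * gg l := by
    intro k hk
    rw [Finset.filter_insert]
    by_cases h : k < a
    · rw [if_pos h, Finset.sum_insert (fun hmem => ha (Finset.mem_filter.mp hmem).1), if_pos h]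
    · rw [if_neg h, if_neg h, zero_add]
  rw [Finset.sum_congr rfl h2, Finset.sum_add_distrib, h1, PP]
  have h3 : ∑ k ∈ s, (if k < a then gg k * gg a else 0)
      = ∑ k ∈ s.filter (fun k => k < a), gg k * gg a := (Finset.sum_filter _ _).symm
  have h4 : gg a * SS s = ∑ l ∈ s.filter (fun l => a < l), gg a * gg l
      + ∑ k ∈ s.filter (fun k => k < a), gg k * gg a := by
    rw [SS, Finset.mul_sum]
    rw [← Finset.sum_filter_add_sum_filter_not s (fun l => a < l) (fun l => gg a * gg l)]
    congr 1
    · refine Finset.sum_congr ?_ (fun _ _ => mul_comm _ _)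
      apply Finset.filter_congr
      intro x hx
      have : x ≠ a := fun h => ha (h ▸ hx)
      simp only [not_lt]
      constructor
      · intro h; omega
      · intro h; omega
  rw [h3, h4]; ring

lemma expand (s : Finset ℕ) :
    ∃ E : PowerSeries ℤ, ∏ k ∈ s, (1 + 2 * gg k) = 1 + 2 * SS s + 4 * PP s + 8 * E := by
  classical
  induction s using Finset.induction_on with
  | empty => exact ⟨0, by simp [SS, PP]⟩
  | insert a s ha ih =>
    obtain ⟨E, hE⟩ := ih
    refine ⟨E + gg a * PP s + 2 * gg a * E, ?_⟩
    have hS : SS (insert a s) = gg a + SS s := by rw [SS, SS, Finset.sum_insert ha]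
    rw [Finset.prod_insert ha, hE, PP_insert a s ha, hS]
    ring

lemma coeff_gg (m k : ℕ) :
    PowerSeries.coeff (R := ℤ) m (gg k) = if 0 < m ∧ k ∣ m then 1 else 0 := by
  rw [gg, coeff_mk]

lemma coeff_gg_mul (n k l : ℕ) (hn : 1 ≤ n) (hk : 1 ≤ k) (hl : 1 ≤ l) :
    PowerSeries.coeff (R := ℤ) n (gg k * gg l) =
      (((Finset.Icc 1 n ×ˢ Finset.Icc 1 n).filter
        (fun p => p.1 * k + p.2 * l = n)).card : ℤ) := by
  classical
  rw [PowerSeries.coeff_mul]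
  have h1 : ∀ p ∈ Finset.HasAntidiagonal.antidiagonal n,
      PowerSeries.coeff (R := ℤ) p.1 (gg k) * PowerSeries.coeff (R := ℤ) p.2 (gg l)
      = if (0 < p.1 ∧ k ∣ p.1) ∧ (0 < p.2 ∧ l ∣ p.2) then (1:ℤ) else 0 := by
    intro p _
    rw [coeff_gg, coeff_gg, ite_zero_mul_ite_zero, one_mul]
  rw [Finset.sum_congr rfl h1, Finset.sum_boole]
  congr 1
  apply Finset.card_nbij' (fun p => (p.1 / k, p.2 / l)) (fun q => (q.1 * k, q.2 * l))
  · rintro ⟨a, b⟩ hab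
    simp only [Finset.mem_coe, Finset.mem_filter, Finset.HasAntidiagonal.mem_antidiagonal] at hab
    obtain ⟨hab, ⟨ha0, hka⟩, hb0, hlb⟩ := hab
    simp only [Finset.mem_coe, Finset.mem_filter, Finset.mem_product, Finset.mem_Icc]
    have h1 : a / k * k = a := Nat.div_mul_cancel hka
    have h2 : b / l * l = b := Nat.div_mul_cancel hlb
    refine ⟨⟨⟨?_, ?_⟩, ?_, ?_⟩, by rw [h1, h2]; exact hab⟩
    · exact Nat.one_le_div_iff hk |>.mpr (Nat.le_of_dvd ha0 hka)
    · exact le_trans (Nat.div_le_self a k) (by omega)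
    · exact Nat.one_le_div_iff hl |>.mpr (Nat.le_of_dvd hb0 hlb)
    · exact le_trans (Nat.div_le_self b l) (by omega)
  · rintro ⟨i, j⟩ hij
    simp only [Finset.mem_coe, Finset.mem_filter, Finset.mem_product, Finset.mem_Icc] at hij
    obtain ⟨⟨⟨hi1, _⟩, hj1, _⟩, hsum⟩ := hij
    simp only [Finset.mem_coe, Finset.mem_filter, Finset.HasAntidiagonal.mem_antidiagonal]
    exact ⟨hsum, ⟨by positivity, Dvd.intro i (mul_comm k i)⟩, by positivity, Dvd.intro j (mul_comm l j)⟩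
  · rintro ⟨a, b⟩ hab
    simp only [Finset.mem_coe, Finset.mem_filter, Finset.HasAntidiagonal.mem_antidiagonal] at hab
    obtain ⟨_, ⟨_, hka⟩, _, hlb⟩ := hab
    simp [Nat.div_mul_cancel hka, Nat.div_mul_cancel hlb]
  · rintro ⟨i, j⟩ hij
    have hk0 : k ≠ 0 := by omega
    have hl0 : l ≠ 0 := by omega
    simp [Nat.mul_div_cancel_left, Nat.mul_div_cancel, Nat.pos_of_ne_zero hk0,
      Nat.pos_of_ne_zero hl0]

def Qset (n : ℕ) : Finset ((ℕ × ℕ) × ℕ × ℕ) :=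
  ((Finset.Icc 1 n ×ˢ Finset.Icc 1 n) ×ˢ (Finset.Icc 1 n ×ˢ Finset.Icc 1 n)).filter
    (fun x => x.1.1 < x.1.2 ∧ x.2.1 * x.1.1 + x.2.2 * x.1.2 = n)

lemma divisors_eq (n : ℕ) (hn : 1 ≤ n) :
    (Finset.Icc 1 n).filter (fun k => k ∣ n) = n.divisors := by
  ext d
  simp only [Finset.mem_filter, Finset.mem_Icc, Nat.mem_divisors]
  constructor
  · rintro ⟨_, hd⟩; exact ⟨hd, by omega⟩
  · rintro ⟨hd, _⟩
    exact ⟨⟨Nat.pos_of_dvd_of_pos hd (by omega), Nat.le_of_dvd (by omega) hd⟩, hd⟩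

lemma coeff_SS (n : ℕ) (hn : 1 ≤ n) :
    PowerSeries.coeff (R := ℤ) n (SS (Finset.Icc 1 n)) = (n.divisors.card : ℤ) := by
  classical
  rw [SS, map_sum, ← divisors_eq n hn]
  have h : ∀ k ∈ Finset.Icc 1 n, PowerSeries.coeff (R := ℤ) n (gg k)
      = if k ∣ n then (1:ℤ) else 0 := by
    intro k _
    rw [coeff_gg]
    congr 1
    simp only [eq_iff_iff, and_iff_right_iff_imp]
    intro _; omega
  rw [Finset.sum_congr rfl h, Finset.sum_boole]

lemma coeff_PP (n : ℕ) (hn : 1 ≤ n)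
    (hgg : ∀ k l, 1 ≤ k → 1 ≤ l → PowerSeries.coeff (R := ℤ) n (gg k * gg l) =
      (((Finset.Icc 1 n ×ˢ Finset.Icc 1 n).filter
        (fun p => p.1 * k + p.2 * l = n)).card : ℤ)) :
    PowerSeries.coeff (R := ℤ) n (PP (Finset.Icc 1 n)) = ((Qset n).card : ℤ) := by
  classical
  rw [PP, map_sum]
  have step1 : ∀ k ∈ Finset.Icc 1 n,
      PowerSeries.coeff (R := ℤ) n (∑ l ∈ (Finset.Icc 1 n).filter (fun l => k < l), gg k * gg l)
      = ∑ l ∈ Finset.Icc 1 n, if k < l then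
          (((Finset.Icc 1 n ×ˢ Finset.Icc 1 n).filter
            (fun p => p.1 * k + p.2 * l = n)).card : ℤ) else 0 := by
    intro k hk
    rw [map_sum, Finset.sum_filter]
    apply Finset.sum_congr rfl
    intro l hl
    by_cases h : k < l
    · rw [if_pos h, if_pos h, hgg k l (Finset.mem_Icc.mp hk).1 (Finset.mem_Icc.mp hl).1]
    · rw [if_neg h, if_neg h]
  rw [Finset.sum_congr rfl step1]
  rw [Qset, Finset.card_filter, Finset.sum_product]
  push_cast
  rw [Finset.sum_product]
  apply Finset.sum_congr rfl
  intro k _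
  apply Finset.sum_congr rfl
  intro l _
  by_cases h : k < l
  · simp only [h, true_and, if_pos]
    rw [Finset.sum_boole]
  · simp [h]


lemma card_modEq_fixed {α : Type*} [DecidableEq α] (s : Finset α) (g : α → α)
    (hmem : ∀ a ∈ s, g a ∈ s) (hinv : ∀ a ∈ s, g (g a) = a) :
    s.card ≡ (s.filter fun a => g a = a).card [MOD 2] := by
  classical
  have hsplit := Finset.card_filter_add_card_filter_not
    (s := s) (p := fun a => g a = a)
  have ht : 2 ∣ (s.filter fun a => ¬ g a = a).card := by
    rw [← ZMod.natCast_eq_zero_iff]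
    rw [Finset.card_eq_sum_ones]
    push_cast
    apply Finset.sum_involution (fun a _ => g a)
    · intro a _; decide
    · intro a ha _
      exact (Finset.mem_filter.mp ha).2
    · intro a ha
      have h1 := Finset.mem_filter.mp ha
      exact Finset.mem_filter.mpr ⟨hmem a h1.1,
        fun h => h1.2 (((hinv a h1.1).symm.trans h).symm)⟩
    · intro a ha
      exact hinv a (Finset.mem_filter.mp ha).1
  obtain ⟨u, hu⟩ := ht
  have := hsplit
  unfold Nat.ModEq
  omega

lemma tau_eq_two_mul (n : ℕ) (hn : 1 ≤ n) (hsq : ¬ IsSquare n) :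
    n.divisors.card = 2 * ((n.divisors.filter (fun d => d * d < n)).card) := by
  classical
  have hsplit := Finset.card_filter_add_card_filter_not
    (s := n.divisors) (p := fun d => d * d < n)
  have key : (n.divisors.filter (fun d => ¬ d * d < n)).card
      = (n.divisors.filter (fun d => d * d < n)).card := by
    apply Finset.card_nbij' (fun d => n / d) (fun d => n / d)
    · intro d hd
      simp only [Finset.mem_coe]
      have h1 := Finset.mem_filter.mp hd
      obtain ⟨hdvd, hn0⟩ := Nat.mem_divisors.mp h1.1
      obtain ⟨e, he⟩ := hdvd
      have hd0 : 0 < d := Nat.pos_of_dvd_of_pos ⟨e, he⟩ (by omega)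
      have hediv : n / d = e := by rw [he, Nat.mul_div_cancel_left e hd0]
      have he0 : 0 < e := by
        rcases Nat.eq_zero_or_pos e with rfl | h; · omega
        · exact h
      have hgt : n < d * d := by
        rcases lt_or_eq_of_le (not_lt.mp h1.2) with h | h
        · exact h
        · exact absurd ⟨d, h⟩ hsq
      refine Finset.mem_filter.mpr ⟨Nat.mem_divisors.mpr
        ⟨⟨d, by rw [hediv, he]; exact Nat.mul_comm d e⟩, hn0⟩, ?_⟩
      · rw [hediv]
        calc e * e < d * e := by
              apply Nat.mul_lt_mul_of_lt_of_le _ le_rfl he0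
              by_contra h2
              push_neg at h2
              have : d * d ≤ d * e := Nat.mul_le_mul_left d h2
              omega
          _ = n := he.symm
    · intro d hd
      simp only [Finset.mem_coe]
      have h1 := Finset.mem_filter.mp hd
      obtain ⟨hdvd, hn0⟩ := Nat.mem_divisors.mp h1.1
      obtain ⟨e, he⟩ := hdvd
      have hd0 : 0 < d := Nat.pos_of_dvd_of_pos ⟨e, he⟩ (by omega)
      have hediv : n / d = e := by rw [he, Nat.mul_div_cancel_left e hd0]
      have he0 : 0 < e := by
        rcases Nat.eq_zero_or_pos e with rfl | h; · omega
        · exact h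
      have hlt : d < e := by
        by_contra h2
        push_neg at h2
        have : d * e ≤ d * d := Nat.mul_le_mul_left d h2
        omega
      refine Finset.mem_filter.mpr ⟨Nat.mem_divisors.mpr
        ⟨⟨d, by rw [hediv, he]; exact Nat.mul_comm d e⟩, hn0⟩, ?_⟩
      rw [hediv]
      push_neg
      calc n = d * e := he
        _ ≤ e * e := by
            apply Nat.mul_le_mul_right
            omega
    · intro d hd
      have h1 := Finset.mem_filter.mp hd
      obtain ⟨hdvd, hn0⟩ := Nat.mem_divisors.mp h1.1
      exact Nat.div_div_self hdvd hn0
    · intro d hd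
      have h1 := Finset.mem_filter.mp hd
      obtain ⟨hdvd, hn0⟩ := Nat.mem_divisors.mp h1.1
      exact Nat.div_div_self hdvd hn0
  omega

def sig (x : (ℕ × ℕ) × ℕ × ℕ) : (ℕ × ℕ) × ℕ × ℕ :=
  ((x.2.2, x.2.1 + x.2.2), (x.1.2 - x.1.1, x.1.1))

lemma mem_Qset {n : ℕ} {x : (ℕ × ℕ) × ℕ × ℕ} :
    x ∈ Qset n ↔ (1 ≤ x.1.1 ∧ x.1.1 ≤ n) ∧ (1 ≤ x.1.2 ∧ x.1.2 ≤ n) ∧ (1 ≤ x.2.1 ∧ x.2.1 ≤ n)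
      ∧ (1 ≤ x.2.2 ∧ x.2.2 ≤ n) ∧ x.1.1 < x.1.2 ∧ x.2.1 * x.1.1 + x.2.2 * x.1.2 = n := by
  simp only [Qset, Finset.mem_filter, Finset.mem_product, Finset.mem_Icc]
  tauto

lemma sig_mem {n : ℕ} : ∀ x ∈ Qset n, sig x ∈ Qset n := by
  rintro ⟨⟨k, l⟩, i, j⟩ hx
  obtain ⟨⟨hk1, hkn⟩, ⟨hl1, hln⟩, ⟨hi1, hin⟩, ⟨hj1, hjn⟩, hkl, hsum⟩ := mem_Qset.mp hx
  dsimp only at hk1 hkn hl1 hln hi1 hin hj1 hjn hkl hsum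
  have e1 : i * 1 ≤ i * k := Nat.mul_le_mul_left i hk1
  have e2 : j * 2 ≤ j * l := Nat.mul_le_mul_left j (by omega)
  rw [mem_Qset]
  simp only [sig]
  refine ⟨⟨by omega, by omega⟩, ⟨by omega, by omega⟩, ⟨by omega, by omega⟩,
    ⟨by omega, by omega⟩, by omega, ?_⟩
  zify [hkl.le]
  have hsum' : (i:ℤ) * k + (j:ℤ) * l = n := by exact_mod_cast hsum
  linarith [hsum, mul_comm (i : ℤ) (k : ℤ), mul_comm (j : ℤ) (l : ℤ)]

lemma sig_sig {n : ℕ} : ∀ x ∈ Qset n, sig (sig x) = x := by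
  rintro ⟨⟨k, l⟩, i, j⟩ hx
  obtain ⟨⟨hk1, hkn⟩, ⟨hl1, hln⟩, ⟨hi1, hin⟩, ⟨hj1, hjn⟩, hkl, hsum⟩ := mem_Qset.mp hx
  dsimp only at hk1 hkn hl1 hln hi1 hin hj1 hjn hkl hsum
  simp only [sig, Prod.mk.injEq, true_and, and_true]
  omega

lemma fixed_card (n : ℕ) (hn : 1 ≤ n) (hodd : Odd n) :
    ((Qset n).filter (fun x => sig x = x)).card
      = ((n.divisors.filter (fun d => d * d < n)).card) := by
  classical
  apply Finset.card_nbij' (fun x => x.1.1)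
    (fun d => ((d, (n / d - d) / 2 + d), ((n / d - d) / 2, d)))
  · rintro ⟨⟨k, l⟩, i, j⟩ hx
    have hmem := Finset.mem_filter.mp hx
    obtain ⟨⟨hk1, hkn⟩, ⟨hl1, hln⟩, ⟨hi1, hin⟩, ⟨hj1, hjn⟩, hkl, hsum⟩ := mem_Qset.mp hmem.1
    dsimp only at hk1 hkn hl1 hln hi1 hin hj1 hjn hkl hsum
    have hfix := hmem.2
    simp only [sig, Prod.mk.injEq] at hfix
    obtain ⟨⟨hjk, hl⟩, hi, -⟩ := hfix
    have hkey : n = k * (2 * i + k) := by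
      rw [← hsum, ← hjk, ← hl]
      ring
    have hlt : k * k < n := by
      have h5 : k * k < k * (2 * i + k) :=
        Nat.mul_lt_mul_of_pos_left (by omega) (by omega)
      omega
    exact Finset.mem_filter.mpr ⟨Nat.mem_divisors.mpr ⟨⟨2 * i + k, hkey⟩, by omega⟩, hlt⟩
  · intro d hd
    have h1 := Finset.mem_filter.mp hd
    obtain ⟨hdvd, hn0⟩ := Nat.mem_divisors.mp h1.1
    have hd1 : 1 ≤ d := Nat.pos_of_dvd_of_pos hdvd (by omega)
    obtain ⟨m, hdm⟩ : ∃ m, d * m = n := ⟨n / d, Nat.mul_div_cancel' hdvd⟩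
    have hnd : n / d = m := by rw [← hdm, Nat.mul_div_cancel_left m (by omega)]
    have hsq : d * d < n := h1.2
    have hdlt : d < m := by
      by_contra h2
      push_neg at h2
      have : d * m ≤ d * d := Nat.mul_le_mul_left d h2
      omega
    have hoddd : Odd d := hodd.of_dvd_nat hdvd
    have hoddm : Odd m := hodd.of_dvd_nat ⟨d, by rw [← hdm]; exact Nat.mul_comm d m⟩
    obtain ⟨t, ht⟩ := Nat.Odd.sub_odd hoddm hoddd
    have hi : (m - d) / 2 = t := by omega
    have hmn : m ≤ n := Nat.le_of_dvd (by omega) ⟨d, by rw [← hdm]; exact Nat.mul_comm d m⟩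
    have ht1 : 1 ≤ t := by omega
    have hsum : t * d + d * (t + d) = n := by
      have h3 : t * d + d * (t + d) = d * (2 * t + d) := by ring
      rw [h3, show 2 * t + d = m by omega, hdm]
    simp only [Finset.mem_coe]
    rw [Finset.mem_filter, mem_Qset, hnd, hi]
    dsimp only
    refine ⟨⟨⟨by omega, by omega⟩, ⟨by omega, by omega⟩, ⟨by omega, by omega⟩,
      ⟨by omega, by omega⟩, by omega, hsum⟩, ?_⟩
    simp only [sig, Prod.mk.injEq, true_and, and_true]
    omega
  · rintro ⟨⟨k, l⟩, i, j⟩ hx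
    have hmem := Finset.mem_filter.mp hx
    obtain ⟨⟨hk1, hkn⟩, ⟨hl1, hln⟩, ⟨hi1, hin⟩, ⟨hj1, hjn⟩, hkl, hsum⟩ := mem_Qset.mp hmem.1
    dsimp only at hk1 hkn hl1 hln hi1 hin hj1 hjn hkl hsum
    have hfix := hmem.2
    simp only [sig, Prod.mk.injEq] at hfix
    obtain ⟨⟨hjk, hl⟩, hi, -⟩ := hfix
    have hkey : n = k * (2 * i + k) := by
      rw [← hsum, ← hjk, ← hl]
      ring
    have hdiv : n / k = 2 * i + k := by
      rw [hkey, Nat.mul_div_cancel_left _ (by omega : 0 < k)]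
    dsimp only
    rw [hdiv]
    simp only [Prod.mk.injEq, true_and, and_true]
    omega
  · intro d hd
    rfl

lemma fps_eq (k : ℕ) (hk : 1 ≤ k) : fps k = 1 + 2 * gg k := by
  have h1 : (1 - (PowerSeries.X : PowerSeries ℤ) ^ k) *
      PowerSeries.invOfUnit (1 - (PowerSeries.X : PowerSeries ℤ) ^ k) 1 = 1 := by
    apply PowerSeries.mul_invOfUnit
    simp [constantCoeff_X, zero_pow (by omega : k ≠ 0)]
  calc fps k = (1 - X ^ k) * (1 + 2 * gg k) *
        PowerSeries.invOfUnit (1 - (PowerSeries.X : PowerSeries ℤ) ^ k) 1 := by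
        rw [key k hk]; rw [fps]
    _ = 1 + 2 * gg k := by
        rw [mul_comm (1 - X ^ k), mul_assoc, h1, mul_one]

lemma coeff_cast_mul (c m : ℕ) (φ : PowerSeries ℤ) :
    PowerSeries.coeff (R := ℤ) m ((c : PowerSeries ℤ) * φ) = (c : ℤ) * PowerSeries.coeff (R := ℤ) m φ := by
  rw [← nsmul_eq_mul, map_nsmul, nsmul_eq_mul]

end Aux

/-- For every odd positive nonsquare integer `n`, `p̄(n) ≡ 0 (mod 8)`. -/
theorem pbar_odd_nonsquare_mod_eight (n : ℕ) (hn : 1 ≤ n) (hodd : Odd n)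
    (hsq : ¬ IsSquare n) : pbar n ≡ 0 [ZMOD 8] := by
  classical
  have h8 : (8:ℤ) ∣ pbar n := by
    obtain ⟨E, hE⟩ := expand (Finset.Icc 1 n)
    have hprod : ∏ k ∈ Finset.Icc 1 n, fps k = ∏ k ∈ Finset.Icc 1 n, (1 + 2 * gg k) :=
      Finset.prod_congr rfl (fun k hk => fps_eq k (Finset.mem_Icc.mp hk).1)
    have h2 : (2 : PowerSeries ℤ) = ((2:ℕ) : PowerSeries ℤ) := by norm_cast
    have h4 : (4 : PowerSeries ℤ) = ((4:ℕ) : PowerSeries ℤ) := by norm_cast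
    have h8' : (8 : PowerSeries ℤ) = ((8:ℕ) : PowerSeries ℤ) := by norm_cast
    have hcoeff : pbar n = 2 * (n.divisors.card : ℤ) + 4 * ((Qset n).card : ℤ)
        + 8 * PowerSeries.coeff (R := ℤ) n E := by
      rw [pbar, hprod, hE, map_add, map_add, map_add, h2, h4, h8',
        coeff_cast_mul, coeff_cast_mul, coeff_cast_mul,
        coeff_SS n hn, coeff_PP n hn (fun k l hk hl => coeff_gg_mul n k l hn hk hl),
        PowerSeries.coeff_one]
      simp only [if_neg (by omega : ¬ n = 0)]
      push_cast
      ring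
    have hτ := tau_eq_two_mul n hn hsq
    have hmod : (Qset n).card % 2 = ((n.divisors.filter (fun d => d * d < n)).card) % 2 := by
      have h := card_modEq_fixed (Qset n) sig sig_mem sig_sig
      rw [fixed_card n hn hodd] at h
      exact h
    have hdvd4 : 4 ∣ (n.divisors.card + 2 * (Qset n).card) := by omega
    obtain ⟨u, hu⟩ := hdvd4
    refine ⟨(u : ℤ) + PowerSeries.coeff (R := ℤ) n E, ?_⟩
    have hz : (n.divisors.card : ℤ) + 2 * ((Qset n).card : ℤ) = 4 * u := by exact_mod_cast hu
    rw [hcoeff]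
    linarith
  exact (Int.modEq_zero_iff_dvd).mpr h8
end

section
/- For every nonnegative integer k and every nonnegative integer n, pl̄_{2k+1}(2n+1) ≡ p̄(2n+1) (mod 4), where pl̄_{2k+1} counts plane overpartitions with at most 2k+1 rows and p̄ counts overpartitions. -/
open PowerSeries

/-- The number of plane overpartitions of `n` with at most `K` rows: the coefficient
of `q^n` in `∏_{k≥1} ((1+q^k)/(1-q^k))^(min K k)`, truncated at `k = n`. -/
noncomputable def plbark (K n : ℕ) : ℤ :=
  PowerSeries.coeff (R := ℤ) n (∏ k ∈ Finset.Icc 1 n, fps k ^ min K k)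

private lemma aux_inv (j : ℕ) (hj : 1 ≤ j) :
    (1 - X ^ j : PowerSeries ℤ) * PowerSeries.invOfUnit (1 - X ^ j) 1 = 1 := by
  apply PowerSeries.mul_invOfUnit
  simp [zero_pow (by omega : j ≠ 0)]

private lemma fps_eq_s15 (j : ℕ) (hj : 1 ≤ j) :
    fps j = 1 + 2 * (X ^ j * PowerSeries.invOfUnit (1 - X ^ j : PowerSeries ℤ) 1) := by
  have h := aux_inv j hj
  unfold fps
  have h2 : (1 + X ^ j : PowerSeries ℤ) = (1 - X ^ j) + 2 * X ^ j := by ring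
  rw [h2, add_mul, h]; ring

private lemma map_fps_sq (j : ℕ) (hj : 1 ≤ j) :
    (PowerSeries.map (Int.castRingHom (ZMod 4)) (fps j)) ^ 2 = 1 := by
  have h := congrArg (PowerSeries.map (Int.castRingHom (ZMod 4))) (aux_inv j hj)
  set v := PowerSeries.map (Int.castRingHom (ZMod 4))
    (PowerSeries.invOfUnit (1 - X ^ j : PowerSeries ℤ) 1) with hv
  have hinv : (1 - X ^ j : PowerSeries (ZMod 4)) * v = 1 := by
    simpa using h
  have h4 : (4 : PowerSeries (ZMod 4)) = 0 := by
    rw [← map_ofNat (PowerSeries.C (R := ZMod 4)) 4, show (4 : ZMod 4) = 0 by decide, map_zero]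
  have hsq : ((1 + X ^ j : PowerSeries (ZMod 4))) ^ 2 = (1 - X ^ j) ^ 2 := by
    linear_combination (X ^ j : PowerSeries (ZMod 4)) * h4
  have hmap : PowerSeries.map (Int.castRingHom (ZMod 4)) (fps j)
      = (1 + X ^ j : PowerSeries (ZMod 4)) * v := by
    unfold fps; simp [hv]
  calc (PowerSeries.map (Int.castRingHom (ZMod 4)) (fps j)) ^ 2
      = ((1 + X ^ j : PowerSeries (ZMod 4))) ^ 2 * v ^ 2 := by rw [hmap]; ring
    _ = ((1 - X ^ j : PowerSeries (ZMod 4)) * v) ^ 2 := by rw [hsq]; ring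
    _ = 1 := by rw [hinv]; ring

private lemma rescale_fps_even (j : ℕ) (hj : 1 ≤ j) (he : Even j) :
    PowerSeries.rescale (-1 : ℤ) (fps j) = fps j := by
  have h := aux_inv j hj
  set v := PowerSeries.invOfUnit (1 - X ^ j : PowerSeries ℤ) 1 with hv
  have hX : PowerSeries.rescale (-1 : ℤ) (X ^ j) = X ^ j := by
    rw [map_pow, rescale_X, mul_pow, ← map_pow, he.neg_one_pow, map_one, one_mul]
  have h2 : (1 - X ^ j : PowerSeries ℤ) * PowerSeries.rescale (-1 : ℤ) v = 1 := by
    have := congrArg (PowerSeries.rescale (-1 : ℤ)) h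
    rwa [map_mul, map_sub, map_one, hX] at this
  have huniq : PowerSeries.rescale (-1 : ℤ) v = v := by
    calc PowerSeries.rescale (-1 : ℤ) v
        = PowerSeries.rescale (-1 : ℤ) v * ((1 - X ^ j) * v) := by rw [h, mul_one]
      _ = ((1 - X ^ j) * PowerSeries.rescale (-1 : ℤ) v) * v := by ring
      _ = v := by rw [h2, one_mul]
  unfold fps
  rw [map_mul, map_add, map_one, hX, huniq]

private lemma pow_eq_pow_mod_two {M : Type*} [Monoid M] (g : M) (h : g ^ 2 = 1) (m : ℕ) :
    g ^ m = g ^ (m % 2) := by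
  conv_lhs => rw [← Nat.div_add_mod m 2]
  rw [pow_add, pow_mul, h, one_pow, one_mul]

/-- For all `k, n ≥ 0`, `pl̄_{2k+1}(2n+1) ≡ p̄(2n+1) (mod 4)`. -/
theorem plbark_odd_rows_congr_pbar (k n : ℕ) :
    plbark (2 * k + 1) (2 * n + 1) ≡ pbar (2 * n + 1) [ZMOD 4] := by
  suffices hmain : ((plbark (2 * k + 1) (2 * n + 1) : ℤ) : ZMod 4)
      = ((pbar (2 * n + 1) : ℤ) : ZMod 4) by
    have := (ZMod.intCast_eq_intCast_iff (plbark (2 * k + 1) (2 * n + 1))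
      (pbar (2 * n + 1)) 4).mp hmain
    exact_mod_cast this
  set N := 2 * n + 1 with hN
  set φ := Int.castRingHom (ZMod 4) with hφ
  set g : ℕ → PowerSeries (ZMod 4) := fun j => PowerSeries.map φ (fps j) with hg
  set e : ℕ → ℕ := fun j => (min (2 * k + 1) j - 1) % 2 with he
  have hcast : ∀ m : ℕ, ∀ f : PowerSeries ℤ,
      ((PowerSeries.coeff (R := ℤ) m f : ℤ) : ZMod 4)
        = PowerSeries.coeff (R := ZMod 4) m (PowerSeries.map φ f) := by
    intro m f; rw [PowerSeries.coeff_map]; rfl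
  -- the two ZMod 4 power series
  set f : PowerSeries (ZMod 4) := ∏ j ∈ Finset.Icc 1 N, g j with hf
  set G : PowerSeries (ZMod 4) := ∏ j ∈ Finset.Icc 1 N, g j ^ e j with hG
  set P : PowerSeries ℤ := ∏ j ∈ Finset.Icc 1 N, fps j ^ e j with hP
  have hGP : G = PowerSeries.map φ P := by
    rw [hG, hP, map_prod]
    exact Finset.prod_congr rfl fun j _ => by rw [map_pow]
  -- step 1: the plane product equals f * G
  have hsplit : PowerSeries.map φ (∏ j ∈ Finset.Icc 1 N, fps j ^ min (2 * k + 1) j)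
      = f * G := by
    rw [map_prod, hf, hG, ← Finset.prod_mul_distrib]
    refine Finset.prod_congr rfl fun j hj => ?_
    rw [Finset.mem_Icc] at hj
    rw [map_pow]
    show g j ^ min (2 * k + 1) j = g j * g j ^ e j
    have hmin : min (2 * k + 1) j = 1 + (min (2 * k + 1) j - 1) := by omega
    rw [hmin, pow_add, pow_one,
      pow_eq_pow_mod_two (g j) (map_fps_sq j hj.1) (min (2 * k + 1) j - 1)]
  -- step 2a: odd coefficients of P vanish
  have hodd : PowerSeries.coeff (R := ℤ) N P = 0 := by
    have hres : PowerSeries.rescale (-1 : ℤ) P = P := by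
      rw [hP, map_prod]
      refine Finset.prod_congr rfl fun j hj => ?_
      rw [Finset.mem_Icc] at hj
      have hej : e j = 0 ∨ e j = 1 := by simp only [he]; omega
      rcases hej with h0 | h1
      · rw [h0, pow_zero, map_one]
      · have hev : Even j := by
          rw [Nat.even_iff]
          have h1' : (min (2 * k + 1) j - 1) % 2 = 1 := by simpa [he] using h1
          omega
        rw [h1, pow_one, rescale_fps_even j hj.1 hev]
    have := congrArg (PowerSeries.coeff (R := ℤ) N) hres
    rw [PowerSeries.coeff_rescale] at this
    have hodd' : (-1 : ℤ) ^ N = -1 := Odd.neg_one_pow ⟨n, by omega⟩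
    rw [hodd'] at this
    linarith
  have hGN : PowerSeries.coeff (R := ZMod 4) N G = 0 := by
    rw [hGP, PowerSeries.coeff_map, hodd, map_zero]
  -- step 2b: f and G are 1 + 2 * something
  have hone : ∀ (s : Finset ℕ) (F : ℕ → PowerSeries (ZMod 4)),
      (∀ j ∈ s, ∃ h, F j = 1 + 2 * h) → ∃ h, (∏ j ∈ s, F j) = 1 + 2 * h := by
    intro s F hs
    classical
    induction s using Finset.induction with
    | empty => exact ⟨0, by simp⟩
    | @insert a s ha ih =>
      obtain ⟨b, hb⟩ := hs a (Finset.mem_insert_self _ _)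
      obtain ⟨c, hc⟩ := ih fun j hj => hs j (Finset.mem_insert_of_mem hj)
      refine ⟨b + c + 2 * b * c, ?_⟩
      rw [Finset.prod_insert ha, hb, hc]; ring
  have hfactor : ∀ j, 1 ≤ j → ∃ h, g j = 1 + 2 * h := by
    intro j hj
    refine ⟨PowerSeries.map φ (X ^ j * PowerSeries.invOfUnit (1 - X ^ j : PowerSeries ℤ) 1), ?_⟩
    rw [hg]
    simp only
    rw [fps_eq_s15 j hj, map_add, map_mul, map_one, map_ofNat]
  obtain ⟨F, hF⟩ := hone (Finset.Icc 1 N) g fun j hj =>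
    hfactor j (Finset.mem_Icc.mp hj).1
  obtain ⟨H, hH⟩ := hone (Finset.Icc 1 N) (fun j => g j ^ e j) (fun j hj => by
    show ∃ h, g j ^ e j = 1 + 2 * h
    rcases (by simp only [he]; omega : e j = 0 ∨ e j = 1) with h0 | h1
    · exact ⟨0, by rw [h0]; simp⟩
    · obtain ⟨h, hh⟩ := hfactor j (Finset.mem_Icc.mp hj).1
      exact ⟨h, by rw [h1, pow_one, hh]⟩)
  -- step 3: conclude
  have h4 : (4 : PowerSeries (ZMod 4)) = 0 := by
    rw [← map_ofNat (PowerSeries.C (R := ZMod 4)) 4, show (4 : ZMod 4) = 0 by decide, map_zero]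
  have hF' : f = 1 + 2 * F := by rw [hf]; exact hF
  have hH' : G = 1 + 2 * H := by rw [hG]; exact hH
  have hkey : f * G = f + (G - 1) := by
    rw [hF', hH']
    linear_combination F * H * h4
  have hfmap : PowerSeries.map φ (∏ j ∈ Finset.Icc 1 N, fps j) = f := by
    rw [hf, map_prod]
  show ((plbark (2 * k + 1) N : ℤ) : ZMod 4) = ((pbar N : ℤ) : ZMod 4)
  simp only [plbark, pbar]
  rw [hcast, hcast, hsplit, hkey, hfmap, map_add, map_sub, hGN,
    PowerSeries.coeff_one, if_neg (by omega : ¬ N = 0)]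
  ring
end

section
/- For all integers n ≥ 1, pl̄_4(12n) ≡ 0 (mod 8) and pl̄_4(6n+3) ≡ 0 (mod 8), where pl̄_4 counts plane overpartitions with at most 4 rows. -/
open PowerSeries

namespace Aux

lemma cc_one_sub_X_pow {R : Type*} [CommRing R] {k : ℕ} (hk : k ≠ 0) :
    constantCoeff (R := R) (1 - X ^ k) = 1 := by
  simp [map_pow, constantCoeff_X, zero_pow hk]

lemma cancel {R : Type*} [CommRing R] {u a b : PowerSeries R}
    (hu : constantCoeff (R := R) u = 1) (h : a * u = b * u) : a = b := by
  have h1 : u * PowerSeries.invOfUnit u 1 = 1 :=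
    PowerSeries.mul_invOfUnit u 1 (by simpa using hu)
  calc a = a * (u * PowerSeries.invOfUnit u 1) := by rw [h1, mul_one]
    _ = a * u * PowerSeries.invOfUnit u 1 := by ring
    _ = b * u * PowerSeries.invOfUnit u 1 := by rw [h]
    _ = b * (u * PowerSeries.invOfUnit u 1) := by ring
    _ = b := by rw [h1, mul_one]

lemma fps_mul {k : ℕ} (hk : k ≠ 0) :
    fps k * (1 - X ^ k) = 1 + (X : PowerSeries ℤ) ^ k := by
  have h1 : (1 - (X : PowerSeries ℤ) ^ k) *
      PowerSeries.invOfUnit (1 - (X : PowerSeries ℤ) ^ k) 1 = 1 :=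
    PowerSeries.mul_invOfUnit _ 1 (by simpa using cc_one_sub_X_pow (R := ℤ) hk)
  unfold fps
  calc (1 + (X : PowerSeries ℤ) ^ k) * PowerSeries.invOfUnit (1 - X ^ k) 1 * (1 - X ^ k)
      = (1 + X ^ k) * ((1 - X ^ k) * PowerSeries.invOfUnit (1 - X ^ k) 1) := by ring
    _ = 1 + X ^ k := by rw [h1, mul_one]

lemma constantCoeff_fps {k : ℕ} (hk : k ≠ 0) : constantCoeff (R := ℤ) (fps k) = 1 := by
  unfold fps
  rw [map_mul, PowerSeries.constantCoeff_invOfUnit]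
  simp [map_pow, constantCoeff_X, zero_pow hk]

noncomputable def map2 : PowerSeries ℤ →+* PowerSeries (ZMod 2) :=
  PowerSeries.map (Int.castRingHom (ZMod 2))

noncomputable def map8 : PowerSeries ℤ →+* PowerSeries (ZMod 8) :=
  PowerSeries.map (Int.castRingHom (ZMod 8))

lemma map2_fps {k : ℕ} (hk : k ≠ 0) : map2 (fps k) = 1 := by
  have h := congrArg map2 (fps_mul hk)
  simp only [map_mul, map_sub, map_add, map_one, map_pow, map2, PowerSeries.map_X] at h
  have h2 : (2 : PowerSeries (ZMod 2)) = 0 := by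
    rw [← map_ofNat (C (R := ZMod 2)) 2, show ((2 : ZMod 2) = 0) from rfl, map_zero]
  have h3 : (1 + (X : PowerSeries (ZMod 2)) ^ k) = 1 - X ^ k := by
    linear_combination (X : PowerSeries (ZMod 2)) ^ k * h2
  rw [h3] at h
  refine cancel (cc_one_sub_X_pow hk) ?_
  rw [map2]
  rw [h, one_mul]

lemma map2_S (m : ℕ) : map2 (∏ k ∈ Finset.Icc 1 m, fps k) = 1 := by
  rw [map_prod]
  exact Finset.prod_eq_one fun k hk =>
    map2_fps (by have := (Finset.mem_Icc.mp hk).1; omega)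

lemma constantCoeff_S (m : ℕ) :
    constantCoeff (R := ℤ) (∏ k ∈ Finset.Icc 1 m, fps k) = 1 := by
  rw [map_prod]
  exact Finset.prod_eq_one fun k hk =>
    constantCoeff_fps (by have := (Finset.mem_Icc.mp hk).1; omega)

lemma map8_S_pow (m : ℕ) :
    (map8 (∏ k ∈ Finset.Icc 1 m, fps k)) ^ 4 = 1 := by
  set S := ∏ k ∈ Finset.Icc 1 m, fps k with hS
  set A : PowerSeries (ZMod 8) :=
    PowerSeries.mk fun j => (((PowerSeries.coeff (R := ℤ) j S) / 2 : ℤ) : ZMod 8) with hA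
  have hSA : map8 S = 1 + C (R := ZMod 8) 2 * A := by
    ext j
    rw [map8, PowerSeries.coeff_map]
    rw [map_add, PowerSeries.coeff_one, PowerSeries.coeff_C_mul, hA, PowerSeries.coeff_mk]
    cases j with
    | zero =>
      have h0 : PowerSeries.coeff (R := ℤ) 0 S = 1 := by
        rw [PowerSeries.coeff_zero_eq_constantCoeff, constantCoeff_S]
      rw [h0]
      norm_num
    | succ j =>
      have heven : (2 : ℤ) ∣ PowerSeries.coeff (R := ℤ) (j + 1) S := by
        have h := congrArg (PowerSeries.coeff (R := ZMod 2) (j + 1)) (map2_S m)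
        rw [map2, PowerSeries.coeff_map, PowerSeries.coeff_one] at h
        simp only [Nat.succ_ne_zero, if_false] at h
        exact (ZMod.intCast_zmod_eq_zero_iff_dvd _ 2).mp (by exact_mod_cast h)
      obtain ⟨d, hd⟩ := heven
      simp only [Nat.succ_ne_zero, if_false, zero_add]
      rw [hd, Int.mul_ediv_cancel_left d (by norm_num)]
      simp only [Int.coe_castRingHom]
      push_cast
      ring
  rw [hSA]
  have c2 : C (R := ZMod 8) 2 * C (R := ZMod 8) 2 = C (R := ZMod 8) 4 := by
    rw [← map_mul]; rfl
  have c24 : C (R := ZMod 8) 2 + C (R := ZMod 8) 2 = C (R := ZMod 8) 4 := by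
    rw [← map_add]; rfl
  have c44m : C (R := ZMod 8) 4 * C (R := ZMod 8) 4 = 0 := by
    rw [← map_mul, show ((4 : ZMod 8) * 4 = 0) from rfl, map_zero]
  have c44a : C (R := ZMod 8) 4 + C (R := ZMod 8) 4 = 0 := by
    rw [← map_add, show ((4 : ZMod 8) + 4 = 0) from rfl, map_zero]
  have sq1 : (1 + C (R := ZMod 8) 2 * A) ^ 2 = 1 + C (R := ZMod 8) 4 * (A + A ^ 2) := by
    have e : (1 + C (R := ZMod 8) 2 * A) ^ 2 =
        1 + (C (R := ZMod 8) 2 + C (R := ZMod 8) 2) * A + (C (R := ZMod 8) 2 * C (R := ZMod 8) 2) * A ^ 2 := by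
      ring
    rw [e, c2, c24]; ring
  have sq2 : (1 + C (R := ZMod 8) 4 * (A + A ^ 2)) ^ 2 = 1 := by
    have e : (1 + C (R := ZMod 8) 4 * (A + A ^ 2)) ^ 2 =
        1 + (C (R := ZMod 8) 4 + C (R := ZMod 8) 4) * (A + A ^ 2)
          + (C (R := ZMod 8) 4 * C (R := ZMod 8) 4) * (A + A ^ 2) ^ 2 := by
      ring
    rw [e, c44m, c44a]; ring
  calc (1 + C (R := ZMod 8) 2 * A) ^ 4 = ((1 + C (R := ZMod 8) 2 * A) ^ 2) ^ 2 := by ring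
    _ = 1 := by rw [sq1, sq2]


noncomputable def Mq : PowerSeries ℤ := (1 - X) ^ 3 * (1 - X ^ 2) ^ 2 * (1 - X ^ 3)
noncomputable def Nq : PowerSeries ℤ := (1 + X) ^ 3 * (1 + X ^ 2) ^ 2 * (1 + X ^ 3)
noncomputable def Hq : PowerSeries ℤ :=
  1 + 2 * X + 6 * X ^ 2 + 6 * X ^ 4 + 6 * X ^ 5 + 4 * X ^ 6 + 2 * X ^ 7 + 2 * X ^ 8
    + 2 * X ^ 10 + 6 * X ^ 11 + 7 * X ^ 12
noncomputable def Kq : PowerSeries ℤ :=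
  X + 2 * X ^ 2 + 4 * X ^ 3 + 8 * X ^ 4 + 13 * X ^ 5 + 18 * X ^ 6 + 22 * X ^ 7 + 27 * X ^ 8
    + 29 * X ^ 9 + 28 * X ^ 10 + 27 * X ^ 11 + 25 * X ^ 12 + 23 * X ^ 13 + 23 * X ^ 14
    + 23 * X ^ 15 + 21 * X ^ 16 + 19 * X ^ 17 + 16 * X ^ 18 + 12 * X ^ 19 + 7 * X ^ 20
    + 3 * X ^ 21 + X ^ 22

lemma cert : Hq * Nq = Mq * (1 - X ^ 12) + 8 * Kq := by
  unfold Hq Kq Mq Nq; ring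

lemma DM_eq_N : (fps 1 ^ 3 * fps 2 ^ 2 * fps 3) * Mq = Nq := by
  have e : (fps 1 ^ 3 * fps 2 ^ 2 * fps 3) * Mq =
      (fps 1 * (1 - X ^ 1)) ^ 3 * (fps 2 * (1 - X ^ 2)) ^ 2 * (fps 3 * (1 - X ^ 3)) := by
    unfold Mq; ring
  rw [e, fps_mul one_ne_zero, fps_mul two_ne_zero, fps_mul three_ne_zero]
  unfold Nq; ring

def hZ : ℕ → ℤ := fun n => [1, 2, 6, 0, 6, 6, 4, 2, 2, 0, 2, 6, 7].getD n 0
def etab : List (ZMod 8) := [0, 2, 6, 0, 6, 6, 4, 2, 2, 0, 2, 6]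
def efun (n : ℕ) : ZMod 8 := if n = 0 then 1 else etab.getD (n % 12) 0
noncomputable def Eser : PowerSeries (ZMod 8) := PowerSeries.mk efun

lemma Hq_eq_mk : Hq = PowerSeries.mk hZ := by
  ext n
  rw [PowerSeries.coeff_mk]
  have hc : ∀ c : ℤ, (c : PowerSeries ℤ) = C (R := ℤ) c := by
    intro c; simp
  unfold Hq
  simp only [map_add, PowerSeries.coeff_one]
  rw [show (2 : PowerSeries ℤ) = C (R := ℤ) 2 by norm_num, show (6 : PowerSeries ℤ) = C (R := ℤ) 6 by norm_num,
    show (4 : PowerSeries ℤ) = C (R := ℤ) 4 by norm_num, show (7 : PowerSeries ℤ) = C (R := ℤ) 7 by norm_num]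
  simp only [PowerSeries.coeff_C_mul, PowerSeries.coeff_X_pow, PowerSeries.coeff_X]
  rcases lt_or_ge n 13 with hn | hn
  · interval_cases n <;> simp [hZ]
  · have : hZ n = 0 := by
      unfold hZ
      apply List.getD_eq_default
      simpa using hn
    rw [this]
    have c1 : n ≠ 0 := by omega
    have c2 : n ≠ 1 := by omega
    have c3 : n ≠ 2 := by omega
    have c4 : n ≠ 4 := by omega
    have c5 : n ≠ 5 := by omega
    have c6 : n ≠ 6 := by omega
    have c7 : n ≠ 7 := by omega
    have c8 : n ≠ 8 := by omega
    have c10 : n ≠ 10 := by omega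
    have c11 : n ≠ 11 := by omega
    have c12 : n ≠ 12 := by omega
    simp [c1, c2, c3, c4, c5, c6, c7, c8, c10, c11, c12]

lemma EH : Eser * (1 - X ^ 12) = map8 Hq := by
  have hm : map8 Hq = PowerSeries.mk fun n => ((hZ n : ℤ) : ZMod 8) := by
    rw [Hq_eq_mk]
    ext n
    rw [map8, PowerSeries.coeff_map, PowerSeries.coeff_mk, PowerSeries.coeff_mk]
    simp
  rw [hm]
  ext n
  rw [mul_sub, mul_one, map_sub, PowerSeries.coeff_mul_X_pow']
  simp only [Eser, PowerSeries.coeff_mk]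
  rcases lt_or_ge n 13 with hn | hn
  · interval_cases n <;> simp [efun, etab, hZ] <;> decide
  · have h1 : efun n = etab.getD (n % 12) 0 := by
      unfold efun; rw [if_neg (by omega)]
    have h2 : efun (n - 12) = etab.getD ((n - 12) % 12) 0 := by
      unfold efun; rw [if_neg (by omega)]
    have h3 : (n - 12) % 12 = n % 12 := by omega
    have h4 : hZ n = 0 := by
      unfold hZ; apply List.getD_eq_default; simpa using hn
    rw [if_pos (by omega : 12 ≤ n), h1, h2, h3, h4]
    simp
lemma eight_zero : (8 : PowerSeries (ZMod 8)) = 0 := by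
  rw [← map_ofNat (C (R := ZMod 8)) 8, show ((8 : ZMod 8) = 0) from rfl, map_zero]

lemma cert8 : map8 Hq * map8 Nq = map8 Mq * (1 - X ^ 12) := by
  have h := congrArg map8 cert
  simp only [map_mul, map_add, map_sub, map_one, map_pow, map8, PowerSeries.map_X,
    map_ofNat] at h
  rw [map8]
  rw [h, show ((8 : PowerSeries (ZMod 8)) = 0) from eight_zero]
  ring

lemma cc_map8 {φ : PowerSeries ℤ} (h : constantCoeff (R := ℤ) φ = 1) :
    constantCoeff (R := ZMod 8) (map8 φ) = 1 := by
  have : constantCoeff (R := ZMod 8) (map8 φ) =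
      (Int.castRingHom (ZMod 8)) (constantCoeff (R := ℤ) φ) := by
    rw [map8]
    exact congrFun (congrArg _ rfl) _ |>.trans (by
      simp [PowerSeries.constantCoeff, PowerSeries.map])
  rw [this, h]
  rfl

lemma cc_Mq : constantCoeff (R := ℤ) Mq = 1 := by
  unfold Mq
  rw [map_mul, map_mul, map_pow, map_pow]
  rw [cc_one_sub_X_pow one_ne_zero |>.symm]
  simp [cc_one_sub_X_pow, (by norm_num : (1:ℕ) ≠ 0), (by norm_num : (2:ℕ) ≠ 0),
    (by norm_num : (3:ℕ) ≠ 0)]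

lemma E_N : Eser * map8 Nq = map8 Mq := by
  refine cancel (u := 1 - X ^ 12) (cc_one_sub_X_pow (by norm_num)) ?_
  calc Eser * map8 Nq * (1 - X ^ 12) = (Eser * (1 - X ^ 12)) * map8 Nq := by ring
    _ = map8 Hq * map8 Nq := by rw [EH]
    _ = map8 Mq * (1 - X ^ 12) := cert8

lemma E_D : Eser * map8 (fps 1 ^ 3 * fps 2 ^ 2 * fps 3) = 1 := by
  refine cancel (u := map8 Mq) (cc_map8 cc_Mq) ?_
  calc Eser * map8 (fps 1 ^ 3 * fps 2 ^ 2 * fps 3) * map8 Mq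
      = Eser * map8 ((fps 1 ^ 3 * fps 2 ^ 2 * fps 3) * Mq) := by
        conv_rhs => rw [map_mul]
        ring
    _ = Eser * map8 Nq := by rw [DM_eq_N]
    _ = map8 Mq := E_N
    _ = 1 * map8 Mq := (one_mul _).symm

lemma prod_id {m : ℕ} (hm : 3 ≤ m) :
    (∏ k ∈ Finset.Icc 1 m, fps k ^ min 4 k) * (fps 1 ^ 3 * fps 2 ^ 2 * fps 3) =
      (∏ k ∈ Finset.Icc 1 m, fps k) ^ 4 := by
  rw [← Finset.prod_pow]
  have h2 : ∀ k ∈ Finset.Icc 1 m, fps k ^ 4 = fps k ^ min 4 k * fps k ^ (4 - min 4 k) := by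
    intro k _; rw [← pow_add]; congr 1; omega
  rw [Finset.prod_congr rfl h2, Finset.prod_mul_distrib]
  congr 1
  have h3 : (∏ k ∈ Finset.Icc 1 m, fps k ^ (4 - min 4 k)) =
      ∏ k ∈ Finset.Icc 1 3, fps k ^ (4 - min 4 k) := by
    refine (Finset.prod_subset (Finset.Icc_subset_Icc_right hm) ?_).symm
    intro x hx hnx
    have h4 : 4 ≤ x := by
      simp only [Finset.mem_Icc] at hx hnx; omega
    have h5 : 4 - min 4 x = 0 := by omega
    rw [h5, pow_zero]
  rw [h3]
  have : Finset.Icc 1 3 = ({1, 2, 3} : Finset ℕ) := rfl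
  rw [this]
  rw [Finset.prod_insert (by decide), Finset.prod_insert (by decide), Finset.prod_singleton]
  norm_num [mul_assoc]

lemma map8_F {m : ℕ} (hm : 3 ≤ m) :
    map8 (∏ k ∈ Finset.Icc 1 m, fps k ^ min 4 k) = Eser := by
  have h1 : map8 (∏ k ∈ Finset.Icc 1 m, fps k ^ min 4 k) *
      map8 (fps 1 ^ 3 * fps 2 ^ 2 * fps 3) = 1 := by
    rw [← map_mul, prod_id hm, map_pow, map8_S_pow]
  calc map8 (∏ k ∈ Finset.Icc 1 m, fps k ^ min 4 k)
      = map8 (∏ k ∈ Finset.Icc 1 m, fps k ^ min 4 k) *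
        (Eser * map8 (fps 1 ^ 3 * fps 2 ^ 2 * fps 3)) := by rw [E_D, mul_one]
    _ = Eser * (map8 (∏ k ∈ Finset.Icc 1 m, fps k ^ min 4 k) *
        map8 (fps 1 ^ 3 * fps 2 ^ 2 * fps 3)) := by ring
    _ = Eser := by rw [h1, mul_one]

end Aux

/-- For all `n ≥ 1`, `pl̄₄(12n) ≡ 0 (mod 8)` and `pl̄₄(6n+3) ≡ 0 (mod 8)`. -/
theorem plbark_four_mod_eight (n : ℕ) (hn : 1 ≤ n) :
    plbark 4 (12 * n) ≡ 0 [ZMOD 8] ∧ plbark 4 (6 * n + 3) ≡ 0 [ZMOD 8] := by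
  have key : ∀ m : ℕ, 3 ≤ m → ((plbark 4 m : ℤ) : ZMod 8) = Aux.efun m := by
    intro m hm
    have h1 := congrArg (PowerSeries.coeff (R := ZMod 8) m) (Aux.map8_F hm)
    rw [Aux.map8, PowerSeries.coeff_map] at h1
    rw [plbark]
    rw [show ((Int.castRingHom (ZMod 8)) ((PowerSeries.coeff (R := ℤ) m)
      (∏ k ∈ Finset.Icc 1 m, fps k ^ min 4 k)) =
      (((PowerSeries.coeff (R := ℤ) m) (∏ k ∈ Finset.Icc 1 m, fps k ^ min 4 k) : ℤ) : ZMod 8))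
      from rfl] at h1
    rw [h1, Aux.Eser, PowerSeries.coeff_mk]
  constructor
  · have h := key (12 * n) (by omega)
    have he : Aux.efun (12 * n) = 0 := by
      unfold Aux.efun
      rw [if_neg (by omega), show (12 * n) % 12 = 0 by omega]
      rfl
    rw [he] at h
    exact Int.modEq_zero_iff_dvd.mpr ((ZMod.intCast_zmod_eq_zero_iff_dvd _ 8).mp h)
  · have h := key (6 * n + 3) (by omega)
    have he : Aux.efun (6 * n + 3) = 0 := by
      unfold Aux.efun
      rw [if_neg (by omega)]
      have : (6 * n + 3) % 12 = 3 ∨ (6 * n + 3) % 12 = 9 := by omega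
      rcases this with h' | h' <;> rw [h'] <;> rfl
    rw [he] at h
    exact Int.modEq_zero_iff_dvd.mpr ((ZMod.intCast_zmod_eq_zero_iff_dvd _ 8).mp h)
end

section
/- For all integers α ≥ 3, β ≥ 1, and n ≥ 0, pl̄_5(2^α·3^β·n + 5) ≡ 0 (mod 8), where pl̄_5 counts plane overpartitions with at most 5 rows. -/
open PowerSeries

open Finset

namespace POP

variable {A : Type*} [CommRing A]

noncomputable def inv1 (A : Type*) [CommRing A] (k : ℕ) : A⟦X⟧ :=
  PowerSeries.invOfUnit (1 - X ^ k) 1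

lemma constCoeff_one_sub_X_pow (k : ℕ) (hk : k ≠ 0) :
    constantCoeff (R := A) (1 - X ^ k) = 1 := by
  simp [map_sub, map_pow, constantCoeff_X, zero_pow hk]

lemma one_sub_mul_inv1 (k : ℕ) (hk : k ≠ 0) : ((1 - X ^ k) * inv1 A k) = 1 := by
  apply PowerSeries.mul_invOfUnit
  simpa using constCoeff_one_sub_X_pow (A := A) k hk

lemma inv_unique {u a b : A⟦X⟧} (ha : u * a = 1) (hb : u * b = 1) : a = b := by
  calc a = a * (u * b) := by rw [hb, mul_one]
    _ = (u * a) * b := by ring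
    _ = b := by rw [ha, one_mul]

/-- the geometric series ∑ X^{kj} -/
lemma coeff_inv1 (k n : ℕ) (hk : k ≠ 0) :
    coeff (R := A) n (inv1 A k) = if k ∣ n then 1 else 0 := by
  have hg : ((1 - X ^ k) * PowerSeries.mk (fun n => if k ∣ n then (1:A) else 0)) = 1 := by
    ext n
    rw [sub_mul, one_mul, map_sub]
    rcases Nat.eq_zero_or_pos n with rfl | hn
    · have : coeff (R := A) 0 (X ^ k * PowerSeries.mk (fun n => if k ∣ n then (1:A) else 0)) = 0 := by
        rw [X_pow_dvd_iff.mp (dvd_mul_right _ _) 0 (Nat.pos_of_ne_zero hk)]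
      simp [this]
    · rcases le_or_gt k n with h | h
      · have h1 : coeff (R := A) n (X ^ k * PowerSeries.mk (fun n => if k ∣ n then (1:A) else 0))
            = coeff (R := A) (n - k) (PowerSeries.mk (fun n => if k ∣ n then (1:A) else 0)) := by
          conv_lhs => rw [show n = (n - k) + k by omega]
          exact coeff_X_pow_mul _ _ _
        rw [h1]
        simp only [coeff_mk, coeff_one]
        have : (k ∣ n) ↔ (k ∣ n - k) := by
          constructor
          · intro hd; exact (Nat.dvd_sub hd dvd_rfl)
          · intro hd; have := Nat.dvd_add hd (dvd_refl k); rwa [Nat.sub_add_cancel h] at this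
        rcases em (k ∣ n) with hd | hd
        · rw [if_pos hd, if_pos (this.mp hd), if_neg (by omega)]; ring
        · rw [if_neg hd, if_neg (fun h' => hd (this.mpr h')), if_neg (by omega)]; ring
      · have h1 : coeff (R := A) n (X ^ k * PowerSeries.mk (fun n => if k ∣ n then (1:A) else 0)) = 0 :=
          X_pow_dvd_iff.mp (dvd_mul_right _ _) n h
        rw [h1]
        simp only [coeff_mk, coeff_one]
        rw [if_neg (show ¬ k ∣ n from fun hd => by have := Nat.le_of_dvd hn hd; omega),
          if_neg (show ¬ n = 0 by omega)]
        ring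
  rw [inv_unique (one_sub_mul_inv1 k hk) hg, coeff_mk]

/-- mod-X^t congruence basics -/
lemma modX_mul {t : ℕ} {f g : A⟦X⟧} (h : X ^ t ∣ f - g) (c : A⟦X⟧) :
    X ^ t ∣ f * c - g * c := by
  have : f * c - g * c = (f - g) * c := by ring
  rw [this]; exact Dvd.dvd.mul_right h c

lemma modX_trans {t : ℕ} {f g h : A⟦X⟧} (h1 : X ^ t ∣ f - g) (h2 : X ^ t ∣ g - h) :
    X ^ t ∣ f - h := by
  have : f - h = (f - g) + (g - h) := by ring
  rw [this]; exact dvd_add h1 h2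

lemma modX_prod_one {t : ℕ} {s : Finset ℕ} {f : ℕ → A⟦X⟧}
    (h : ∀ k ∈ s, X ^ t ∣ f k - 1) : X ^ t ∣ (∏ k ∈ s, f k) - 1 := by
  classical
  induction s using Finset.cons_induction with
  | empty => simp
  | cons a s ha ih =>
    rw [Finset.prod_cons]
    have h1 : X ^ t ∣ f a - 1 := h a (Finset.mem_cons_self a s)
    have h2 : X ^ t ∣ (∏ k ∈ s, f k) - 1 := ih (fun k hk => h k (Finset.mem_cons_of_mem hk))
    have : f a * (∏ k ∈ s, f k) - 1
        = (f a - 1) * (∏ k ∈ s, f k) + ((∏ k ∈ s, f k) - 1) := by ring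
    rw [this]
    exact dvd_add (h1.mul_right _) h2

lemma modX_coeff {t i : ℕ} {f g : A⟦X⟧} (h : X ^ t ∣ f - g) (hi : i < t) :
    coeff (R := A) i f = coeff (R := A) i g := by
  have := X_pow_dvd_iff.mp h i hi
  rw [map_sub] at this
  exact sub_eq_zero.mp this



noncomputable def gbq : ℕ → ℕ → Polynomial ℤ
  | 0, 0 => 1
  | 0, _+1 => 0
  | _+1, 0 => 1
  | m+1, i+1 => gbq m (i+1) * Polynomial.X ^ (2*(i+1)) + gbq m i

lemma gbq_zero_right (m : ℕ) : gbq m 0 = 1 := by cases m <;> rfl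

lemma gbq_succ_succ (m i : ℕ) :
    gbq (m+1) (i+1) = gbq m (i+1) * Polynomial.X ^ (2*(i+1)) + gbq m i := rfl

lemma gbq_eq_zero : ∀ {m i : ℕ}, m < i → gbq m i = 0 := by
  intro m
  induction m with
  | zero => intro i hi; match i, hi with | i+1, _ => rfl
  | succ m ih =>
    intro i hi
    match i, hi with
    | i+1, hi =>
      rw [gbq_succ_succ, ih (by omega), ih (by omega), zero_mul, add_zero]

lemma gbq_diag (m : ℕ) : gbq m m = 1 := by
  induction m with
  | zero => rfl
  | succ m ih =>
    rw [gbq_succ_succ, gbq_eq_zero (by omega), ih, zero_mul, zero_add]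

noncomputable def qp (j : ℕ) : Polynomial ℤ := ∏ k ∈ Icc 1 j, (1 - Polynomial.X ^ (2*k))

lemma qp_zero : qp 0 = 1 := by simp [qp]

lemma qp_succ (j : ℕ) : qp (j+1) = qp j * (1 - Polynomial.X ^ (2*(j+1))) := by
  rw [qp, Finset.prod_Icc_succ_top (by omega)]; rfl

lemma one_sub_X_pow_ne_zero (t : ℕ) (ht : t ≠ 0) :
    (1 - Polynomial.X ^ t : Polynomial ℤ) ≠ 0 := by
  intro h
  have := congrArg (Polynomial.coeff · 0) h
  simp [Polynomial.coeff_X_pow, ht] at this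
  omega

lemma qp_ne_zero (j : ℕ) : qp j ≠ 0 := by
  induction j with
  | zero => simp [qp_zero]
  | succ j ih =>
    rw [qp_succ]
    exact mul_ne_zero ih (one_sub_X_pow_ne_zero _ (by omega))

lemma qp_sub_succ {m i : ℕ} (h : i < m) :
    qp (m - i) = qp (m - (i+1)) * (1 - Polynomial.X ^ (2*(m-i))) := by
  rw [show m - i = (m - (i+1)) + 1 by omega, qp_succ,
    show m - (i+1) + 1 = m - i by omega]

lemma gbq_mul_qp : ∀ m i : ℕ, i ≤ m → gbq m i * qp i * qp (m - i) = qp m := by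
  intro m
  induction m with
  | zero => intro i hi; interval_cases i; simp [gbq_zero_right, qp_zero]
  | succ m ih =>
    intro i hi
    match i with
    | 0 => simp [gbq_zero_right, qp_zero]
    | i+1 =>
      rcases Nat.lt_or_ge i m with hlt | hge
      · have h2 : qp (m+1-(i+1)) = qp (m - (i+1)) * (1 - Polynomial.X ^ (2*(m-i))) := by
          rw [show m + 1 - (i+1) = m - i by omega]
          exact qp_sub_succ hlt
        have e1 := ih (i+1) hlt
        have e2 := ih i (by omega)
        calc gbq (m+1) (i+1) * qp (i+1) * qp (m+1-(i+1))
            = Polynomial.X ^ (2*(i+1)) * (gbq m (i+1) * qp (i+1) * qp (m-(i+1)))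
                * (1 - Polynomial.X ^ (2*(m-i)))
              + (gbq m i * qp i * qp (m - i)) * (1 - Polynomial.X ^ (2*(i+1))) := by
              rw [gbq_succ_succ, h2, qp_sub_succ hlt, qp_succ i]
              ring
          _ = qp m * (1 - Polynomial.X ^ (2*(m+1))) := by
              rw [e1, e2, show 2*(m+1) = 2*(i+1) + 2*(m-i) by omega, pow_add]
              ring
          _ = qp (m+1) := (qp_succ m).symm
      · have hieq : i = m := by omega
        subst hieq
        rw [gbq_diag, Nat.sub_self, qp_zero, one_mul, mul_one]

lemma gbq_pascal2 (m i : ℕ) :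
    gbq (m+1) (i+1) = gbq m (i+1) + Polynomial.X ^ (2*(m-i)) * gbq m i := by
  rcases Nat.lt_or_ge m i with h | h
  · rw [gbq_eq_zero (by omega), gbq_eq_zero (by omega), gbq_eq_zero h, mul_zero, add_zero]
  rcases Nat.eq_or_lt_of_le h with rfl | hlt
  · rw [gbq_diag, gbq_eq_zero (by omega), gbq_diag, Nat.sub_self]
    simp
  · -- i < m
    apply mul_right_cancel₀ (b := qp (i+1) * qp (m - i))
      (mul_ne_zero (qp_ne_zero _) (qp_ne_zero _))
    have hL : gbq (m+1) (i+1) * (qp (i+1) * qp (m-i)) = qp (m+1) := by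
      have h5 := gbq_mul_qp (m+1) (i+1) (by omega)
      rw [show m + 1 - (i+1) = m - i by omega] at h5
      rw [← h5]; ring
    rw [hL]
    symm
    have e1 : gbq m (i+1) * qp (i+1) * qp (m - (i+1)) = qp m := gbq_mul_qp m (i+1) hlt
    have e2 : gbq m i * qp i * qp (m - i) = qp m := gbq_mul_qp m i (by omega)
    calc (gbq m (i+1) + Polynomial.X ^ (2*(m-i)) * gbq m i) * (qp (i+1) * qp (m-i))
        = (gbq m (i+1) * qp (i+1) * qp (m - (i+1))) * (1 - Polynomial.X ^ (2*(m-i)))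
          + Polynomial.X ^ (2*(m-i)) * (gbq m i * qp i * qp (m-i))
            * (1 - Polynomial.X ^ (2*(i+1))) := by
          rw [qp_sub_succ hlt, qp_succ i]
          ring
      _ = qp m * (1 - Polynomial.X ^ (2*(m+1))) := by
          rw [e1, e2, show 2*(m+1) = 2*(m-i) + 2*(i+1) by omega, pow_add]
          ring
      _ = qp (m+1) := (qp_succ m).symm

/-- symmetric squared distance -/
def e (n i : ℕ) : ℕ := (n - i)^2 + (i - n)^2

lemma e_eq_left {n i : ℕ} (h : i ≤ n) : e n i = (n - i)^2 := by
  unfold e; rw [Nat.sub_eq_zero_of_le h]; ring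

lemma e_eq_right {n i : ℕ} (h : n ≤ i) : e n i = (i - n)^2 := by
  unfold e; rw [Nat.sub_eq_zero_of_le h]; ring

lemma e1 (n i : ℕ) : 2*i + e (n+1) i = 2*n + 1 + e n i := by
  rcases le_or_gt i n with h | h
  · rw [e_eq_left (by omega), e_eq_left h]
    zify [h, show i ≤ n + 1 by omega]
    ring
  · rw [e_eq_right (by omega), e_eq_right (by omega)]
    zify [show n + 1 ≤ i by omega, show n ≤ i by omega]
    ring

lemma e2 (n i : ℕ) : e (n+1) (i+1) = e n i := by
  unfold e
  rw [Nat.succ_sub_succ, Nat.succ_sub_succ]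

lemma e3 {n k : ℕ} (h : k ≤ 2*n) : 2*(2*n-k) + e (n+1) (k+2) = 2*n+1 + e n k := by
  rcases le_or_gt (k+1) n with hc | hc
  · rw [e_eq_left (show k+2 ≤ n+1 by omega), e_eq_left (show k ≤ n by omega)]
    zify [show k + 2 ≤ n + 1 by omega, show k ≤ n by omega, show k ≤ 2*n by omega]
    ring
  · rw [e_eq_right (show n+1 ≤ k+2 by omega), e_eq_right (show n ≤ k by omega)]
    zify [show n + 1 ≤ k + 2 by omega, show n ≤ k by omega, h]
    ring

lemma e_zero_right (n : ℕ) : e n 0 = n^2 := by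
  rw [e_eq_left (Nat.zero_le n)]; simp


noncomputable def q : Polynomial ℤ := Polynomial.X

lemma Acoef_rec0 (n : ℕ) :
    gbq (2*(n+1)) 0 * q ^ (e (n+1) 0) = q^(2*n+1) * (gbq (2*n) 0 * q ^ (e n 0)) := by
  rw [gbq_zero_right, gbq_zero_right, e_zero_right, e_zero_right, one_mul, one_mul, ← pow_add]
  congr 1
  ring

lemma Acoef_rec1 (n : ℕ) :
    gbq (2*(n+1)) 1 * q ^ (e (n+1) 1)
      = q^(2*n+1) * (gbq (2*n) 1 * q ^ (e n 1))
        + (1 + q^(2*(2*n+1))) * (gbq (2*n) 0 * q ^ (e n 0)) := by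
  have hg : gbq (2*(n+1)) 1 = gbq (2*n) 1 * q^2 + q^(4*n+2) + 1 := by
    rw [show 2*(n+1) = (2*n+1)+1 by omega]
    rw [show (1:ℕ) = 0 + 1 by rfl, gbq_succ_succ (2*n+1) 0]
    rw [gbq_pascal2 (2*n) 0]
    rw [gbq_zero_right, gbq_zero_right]
    show (gbq (2*n) 1 + Polynomial.X ^ (2*(2*n-0)) * 1) * Polynomial.X ^ (2*(0+1)) + 1 = _
    simp only [Nat.sub_zero, mul_one]
    rw [show Polynomial.X = q from rfl]
    rw [show 2*(2*n) = 4*n by omega]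
    ring
  have h1 : q^(2*n+1) * q^(e n 1) = q^2 * q^(n^2) := by
    rw [← pow_add, ← pow_add]
    congr 1
    have h2 := e1 n 1
    rw [e2 n 0, e_zero_right] at h2
    omega
  rw [hg, gbq_zero_right, e_zero_right, e2 n 0, e_zero_right]
  linear_combination (-(gbq (2*n) 1 : Polynomial ℤ)) * h1

lemma Acoef_rec2 (n k : ℕ) :
    gbq (2*(n+1)) (k+2) * q ^ (e (n+1) (k+2))
      = q^(2*n+1) * (gbq (2*n) (k+2) * q ^ (e n (k+2)))
        + (1 + q^(2*(2*n+1))) * (gbq (2*n) (k+1) * q ^ (e n (k+1)))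
        + q^(2*n+1) * (gbq (2*n) k * q ^ (e n k)) := by
  rcases le_or_gt k (2*n) with hk | hk
  swap
  · rw [gbq_eq_zero (show 2*(n+1) < k+2 by omega), gbq_eq_zero (show 2*n < k+2 by omega),
      gbq_eq_zero (show 2*n < k+1 by omega), gbq_eq_zero (show 2*n < k by omega)]
    ring
  · have hexp : gbq (2*(n+1)) (k+2)
        = (gbq (2*n) (k+2) + q^(2*(2*n-(k+1))) * gbq (2*n) (k+1)) * q^(2*(k+2))
          + (gbq (2*n) (k+1) + q^(2*(2*n-k)) * gbq (2*n) k) := by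
      rw [show 2*(n+1) = (2*n+1)+1 by omega, gbq_succ_succ (2*n+1) (k+1),
        gbq_pascal2 (2*n) (k+1), gbq_pascal2 (2*n) k]
      rw [show Polynomial.X = q from rfl]
    have H1 : q^(2*(k+2)) * q^(e n (k+1)) = q^(2*n+1) * q^(e n (k+2)) := by
      rw [← pow_add, ← pow_add]
      congr 1
      have h2 := e1 n (k+2)
      rw [e2 n (k+1)] at h2
      omega
    have H4 : q^(2*(2*n-k)) * q^(e n (k+1)) = q^(2*n+1) * q^(e n k) := by
      rw [← pow_add, ← pow_add]
      congr 1
      have h3 := e3 (n := n) (k := k) hk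
      rw [e2 n (k+1)] at h3
      omega
    rw [hexp, e2 n (k+1)]
    rcases le_or_gt (k+1) (2*n) with hk1 | hk1
    · have H2 : q^(2*(2*n-(k+1))) * q^(2*(k+2)) = q^(2*(2*n+1)) := by
        rw [← pow_add]
        congr 1
        omega
      linear_combination (gbq (2*n) (k+2)) * H1 + (gbq (2*n) (k+1)) * q^(e n (k+1)) * H2
        + (gbq (2*n) k) * H4
    · have hz : gbq (2*n) (k+1) = 0 := gbq_eq_zero (by omega)
      rw [hz]
      linear_combination (gbq (2*n) (k+2)) * H1 + (gbq (2*n) k) * H4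

noncomputable def Fjtp (n : ℕ) : Polynomial (Polynomial ℤ) :=
  ∏ k ∈ Icc 1 n,
    ((1 + Polynomial.C (q^(2*k-1)) * Polynomial.X) * (Polynomial.X + Polynomial.C (q^(2*k-1))))

noncomputable def Rjtp (n : ℕ) : Polynomial (Polynomial ℤ) :=
  ∑ i ∈ range (2*n+1), Polynomial.C (gbq (2*n) i * q ^ (e n i)) * Polynomial.X ^ i

lemma coeff_Rjtp (n j : ℕ) : (Rjtp n).coeff j = gbq (2*n) j * q ^ (e n j) := by
  rw [Rjtp, Polynomial.finset_sum_coeff]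
  simp only [Polynomial.coeff_C_mul, Polynomial.coeff_X_pow]
  rcases lt_or_ge j (2*n+1) with h | h
  · rw [Finset.sum_eq_single j]
    · rw [if_pos rfl, mul_one]
    · intro b _ hbj
      rw [if_neg (fun hh => hbj hh.symm), mul_zero]
    · intro hj
      exact absurd (Finset.mem_range.mpr h) hj
  · rw [Finset.sum_eq_zero, gbq_eq_zero (show 2*n < j by omega), zero_mul]
    intro b hb
    have hne : j ≠ b := by rw [Finset.mem_range] at hb; omega
    rw [if_neg hne, mul_zero]

lemma jtp (n : ℕ) : Fjtp n = Rjtp n := by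
  induction n with
  | zero =>
    rw [Fjtp, Rjtp]
    simp [gbq_zero_right, e]
  | succ n ih =>
    have hstep : Fjtp (n+1) = Fjtp n *
        ((1 + Polynomial.C (q^(2*n+1)) * Polynomial.X)
          * (Polynomial.X + Polynomial.C (q^(2*n+1)))) := by
      rw [Fjtp, Fjtp, Finset.prod_Icc_succ_top (by omega)]
      congr 3 <;> rw [show 2*(n+1)-1 = 2*n+1 by omega]
    have hG : ((1 + Polynomial.C (q^(2*n+1)) * Polynomial.X)
          * (Polynomial.X + Polynomial.C (q^(2*n+1))))
        = Polynomial.C (q^(2*n+1)) * Polynomial.X ^ 0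
          + Polynomial.C (1 + q^(2*(2*n+1))) * Polynomial.X ^ 1
          + Polynomial.C (q^(2*n+1)) * Polynomial.X ^ 2 := by
      simp only [map_add, map_mul, map_pow, map_one]
      ring
    rw [hstep, ih, hG]
    apply Polynomial.ext
    intro j
    rw [mul_add, mul_add]
    simp only [Polynomial.coeff_add]
    have hc : ∀ (a : Polynomial ℤ) (t : ℕ),
        (Rjtp n * (Polynomial.C a * Polynomial.X ^ t)).coeff j
          = if t ≤ j then (gbq (2*n) (j - t) * q ^ (e n (j - t))) * a else 0 := by
      intro a t
      rw [show Rjtp n * (Polynomial.C a * Polynomial.X ^ t)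
          = (Rjtp n * Polynomial.C a) * Polynomial.X ^ t by ring]
      rw [Polynomial.coeff_mul_X_pow']
      rcases le_or_gt t j with h | h
      · rw [if_pos h, if_pos h, Polynomial.coeff_mul_C, coeff_Rjtp]
      · rw [if_neg (by omega), if_neg (by omega)]
    rw [hc, hc, hc, coeff_Rjtp]
    match j with
    | 0 =>
      rw [if_pos (le_refl 0), if_neg (show ¬ (1:ℕ) ≤ 0 by omega),
        if_neg (show ¬ (2:ℕ) ≤ 0 by omega)]
      rw [Nat.sub_zero, add_zero, add_zero, Acoef_rec0]
      ring
    | 1 =>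
      rw [if_pos (show (0:ℕ) ≤ 1 by omega), if_pos (le_refl 1),
        if_neg (show ¬ (2:ℕ) ≤ 1 by omega)]
      rw [Nat.sub_zero, Nat.sub_self, add_zero, Acoef_rec1]
      ring
    | (k+2) =>
      rw [if_pos (show (0:ℕ) ≤ k+2 by omega), if_pos (show (1:ℕ) ≤ k+2 by omega),
        if_pos (show (2:ℕ) ≤ k+2 by omega)]
      rw [Nat.sub_zero, show k+2-1 = k+1 by omega, show k+2-2 = k by omega, Acoef_rec2]
      ring

lemma jtp_eval (n : ℕ) :
    (∏ k ∈ Icc 1 n, (1 - q^(2*k-1))^2)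
      = ∑ i ∈ range (2*n+1), (-1:Polynomial ℤ)^(n+i) * (gbq (2*n) i * q ^ (e n i)) := by
  have h := congrArg (Polynomial.eval (-1 : Polynomial ℤ)) (jtp n)
  rw [Fjtp, Rjtp, Polynomial.eval_prod, Polynomial.eval_finset_sum] at h
  have hL : ∀ k ∈ Icc 1 n,
      Polynomial.eval (-1 : Polynomial ℤ)
        ((1 + Polynomial.C (q^(2*k-1)) * Polynomial.X)
          * (Polynomial.X + Polynomial.C (q^(2*k-1))))
      = (-1) * (1 - q^(2*k-1))^2 := by
    intro k _
    simp only [Polynomial.eval_mul, Polynomial.eval_add, Polynomial.eval_one,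
      Polynomial.eval_C, Polynomial.eval_X, Polynomial.eval_pow]
    ring
  rw [Finset.prod_congr rfl hL, Finset.prod_mul_distrib, Finset.prod_const,
    Nat.card_Icc] at h
  simp only [Polynomial.eval_mul, Polynomial.eval_C, Polynomial.eval_pow,
    Polynomial.eval_X] at h
  have hcard : n + 1 - 1 = n := by omega
  rw [hcard] at h
  have h2 := congrArg (fun x => (-1 : Polynomial ℤ)^n * x) h
  rw [← mul_assoc, ← pow_add, Even.neg_one_pow ⟨n, by omega⟩, one_mul] at h2
  rw [h2, Finset.mul_sum]
  apply Finset.sum_congr rfl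
  intro i _
  rw [pow_add]
  ring




noncomputable def Ψ : Polynomial ℤ →+* PowerSeries ℤ := Polynomial.coeToPowerSeries.ringHom

lemma Ψ_X : Ψ Polynomial.X = X := Polynomial.coe_X

lemma Ψ_q : Ψ q = X := Polynomial.coe_X

noncomputable def qps (j : ℕ) : PowerSeries ℤ := ∏ k ∈ Icc 1 j, (1 - X^(2*k))

lemma Ψ_qp (j : ℕ) : Ψ (qp j) = qps j := by
  rw [qp, qps, map_prod]
  apply Finset.prod_congr rfl
  intro k _
  rw [map_sub, map_one, map_pow, Ψ_X]

noncomputable def gq (m i : ℕ) : PowerSeries ℤ := Ψ (gbq m i)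

lemma gq_mul_qps {m i : ℕ} (h : i ≤ m) : gq m i * qps i * qps (m - i) = qps m := by
  rw [gq, ← Ψ_qp, ← Ψ_qp, ← Ψ_qp, ← map_mul, ← map_mul, gbq_mul_qp m i h]

lemma jtp_ps (n : ℕ) :
    (∏ k ∈ Icc 1 n, (1 - X^(2*k-1))^2 : PowerSeries ℤ)
      = ∑ i ∈ range (2*n+1), (-1)^(n+i) * (gq (2*n) i * X^(e n i)) := by
  have h := congrArg Ψ (jtp_eval n)
  rw [map_prod, map_sum] at h
  calc (∏ k ∈ Icc 1 n, (1 - X^(2*k-1))^2 : PowerSeries ℤ)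
      = ∏ k ∈ Icc 1 n, Ψ ((1 - q^(2*k-1))^2) := by
        apply Finset.prod_congr rfl
        intro k _
        rw [map_pow, map_sub, map_one, map_pow, Ψ_q]
    _ = ∑ i ∈ range (2*n+1), Ψ ((-1)^(n+i) * (gbq (2*n) i * q ^ (e n i))) := h
    _ = _ := by
        apply Finset.sum_congr rfl
        intro i _
        rw [map_mul, map_mul, map_pow, map_neg, map_one, map_pow, Ψ_q]
        rfl

lemma constantCoeff_qps (j : ℕ) : constantCoeff (R := ℤ) (qps j) = 1 := by
  rw [qps, map_prod]
  apply Finset.prod_eq_one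
  intro k hk
  rw [map_sub, map_one, map_pow, constantCoeff_X, zero_pow (by simp at hk; omega), sub_zero]

lemma isUnit_qps (j : ℕ) : IsUnit (qps j) := by
  rw [PowerSeries.isUnit_iff_constantCoeff, constantCoeff_qps]
  exact isUnit_one

lemma qps_approx {a j : ℕ} (h : a ≤ j) : X^(2*a+2) ∣ qps j - qps a := by
  have hsplit : qps j = qps a * ∏ k ∈ Ioc a j, (1 - X^(2*k)) := by
    rw [qps, qps, show Icc 1 j = Ioc 0 j from rfl, show Icc 1 a = Ioc 0 a from rfl,
      ← Finset.prod_Ioc_consecutive _ (Nat.zero_le a) h]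
  rw [hsplit]
  have h1 : X^(2*a+2) ∣ (∏ k ∈ Ioc a j, (1 - X^(2*k) : PowerSeries ℤ)) - 1 := by
    apply modX_prod_one
    intro k hk
    rw [Finset.mem_Ioc] at hk
    have : (1 - X^(2*k) : PowerSeries ℤ) - 1 = -(X^(2*k)) := by ring
    rw [this, dvd_neg]
    exact pow_dvd_pow X (by omega)
  have h2 : qps a * (∏ k ∈ Ioc a j, (1 - X^(2*k) : PowerSeries ℤ)) - qps a
      = ((∏ k ∈ Ioc a j, (1 - X^(2*k) : PowerSeries ℤ)) - 1) * qps a := by ring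
  rw [h2]
  exact h1.mul_right _

lemma modX_mul_mul {t : ℕ} {f f' g g' : PowerSeries ℤ}
    (h1 : X^t ∣ f - f') (h2 : X^t ∣ g - g') : X^t ∣ f*g - f'*g' := by
  have : f*g - f'*g' = (f - f')*g + f'*(g - g') := by ring
  rw [this]
  exact dvd_add (h1.mul_right _) (h2.mul_left _)

lemma unit_cancel {t : ℕ} {u v : PowerSeries ℤ} (hu : IsUnit u) (h : X^t ∣ u * v) :
    X^t ∣ v := by
  obtain ⟨w, hw⟩ := hu.exists_left_inv
  have : v = w * (u * v) := by rw [← mul_assoc, hw, one_mul]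
  rw [this]
  exact h.mul_left _

lemma main_approx {n i : ℕ} (hi : i ≤ 2*n) :
    X^(2*n+1) ∣ qps n * (gq (2*n) i * X^(e n i)) - X^(e n i) := by
  set a := min i (2*n - i) with ha
  have ha1 : a ≤ i := min_le_left _ _
  have ha2 : a ≤ 2*n - i := min_le_right _ _
  have han : a ≤ n := by omega
  have hkey : X^(2*a+2) ∣ qps n * gq (2*n) i - 1 := by
    apply unit_cancel ((isUnit_qps i).mul (isUnit_qps (2*n - i)))
    have hid : qps i * qps (2*n-i) * (qps n * gq (2*n) i - 1)
        = qps n * qps (2*n) - qps i * qps (2*n - i) := by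
      have := gq_mul_qps hi
      calc qps i * qps (2*n-i) * (qps n * gq (2*n) i - 1)
          = qps n * (gq (2*n) i * qps i * qps (2*n - i)) - qps i * qps (2*n-i) := by ring
        _ = qps n * qps (2*n) - qps i * qps (2*n - i) := by rw [this]
    rw [hid]
    have d1 : X^(2*a+2) ∣ qps n * qps (2*n) - qps a * qps a :=
      modX_mul_mul (qps_approx han) (qps_approx (by omega))
    have d2 : X^(2*a+2) ∣ qps i * qps (2*n-i) - qps a * qps a :=
      modX_mul_mul (qps_approx ha1) (qps_approx ha2)
    have : qps n * qps (2*n) - qps i * qps (2*n - i)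
        = (qps n * qps (2*n) - qps a * qps a) - (qps i * qps (2*n-i) - qps a * qps a) := by
      ring
    rw [this]
    exact dvd_sub d1 d2
  have hmul : X^(2*a+2+e n i) ∣ (qps n * gq (2*n) i - 1) * X^(e n i) := by
    rw [pow_add]
    exact mul_dvd_mul hkey dvd_rfl
  have two_mul_le : ∀ d : ℕ, 2*d ≤ d^2 + 1 := by
    intro d
    rcases d with _ | ed
    · omega
    · have : (ed+1)^2 = ed*ed+2*ed+1 := by ring
      omega
  have hle : 2*n+1 ≤ 2*a+2+e n i := by
    rcases le_or_gt i n with h | h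
    · have hai : a = i := by rw [ha, min_eq_left (by omega)]
      rw [hai, e_eq_left h]
      have hd := two_mul_le (n - i)
      omega
    · have hai : a = 2*n - i := by rw [ha, min_eq_right (by omega)]
      rw [hai, e_eq_right (by omega)]
      have hd := two_mul_le (i - n)
      omega
  have : (qps n * gq (2*n) i - 1) * X^(e n i)
      = qps n * (gq (2*n) i * X^(e n i)) - X^(e n i) := by ring
  rw [this] at hmul
  exact dvd_trans (pow_dvd_pow X hle) hmul

noncomputable def Θ (n : ℕ) : PowerSeries ℤ :=
  1 + 2 * ∑ s ∈ Icc 1 n, (-1)^s * X^(s^2)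

lemma diag_sum (n : ℕ) :
    (∑ i ∈ range (2*n+1), (-1:PowerSeries ℤ)^(n+i) * X^(e n i)) = Θ n := by
  induction n with
  | zero =>
    rw [Θ]
    simp [e]
  | succ n ih =>
    have hg : ∀ i : ℕ, (-1:PowerSeries ℤ)^(n+1+(i+1)) * X^(e (n+1) (i+1))
        = (-1)^(n+i) * X^(e n i) := by
      intro i
      rw [e2, show n+1+(i+1) = (n+i)+2 by omega, pow_add]
      ring
    have hsign : (-1:PowerSeries ℤ)^(n+(2*n+1)) = (-1)^(n+1) := by
      rw [show n+(2*n+1) = 2*n + (n+1) by omega, pow_add,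
        (Even.neg_one_pow ⟨n, by omega⟩ : (-1:PowerSeries ℤ)^(2*n) = 1), one_mul]
    have hΘ : Θ (n+1) = Θ n + 2*((-1)^(n+1) * X^((n+1)^2)) := by
      rw [Θ, Θ, Finset.sum_Icc_succ_top (by omega : 1 ≤ n + 1)]
      ring
    have etop : e n (2*n+1) = (n+1)^2 := by
      rw [e_eq_right (by omega), show 2*n+1-n = n+1 by omega]
    rw [show 2*(n+1)+1 = (2*n+2)+1 by omega, Finset.sum_range_succ']
    simp only [hg]
    rw [Finset.sum_range_succ, ih, etop, hsign, e_zero_right, Nat.add_zero, hΘ]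
    ring

lemma gauss_core (n : ℕ) :
    X^(2*n+1) ∣ qps n * (∏ k ∈ Icc 1 n, (1 - X^(2*k-1))^2 : PowerSeries ℤ) - Θ n := by
  rw [jtp_ps, ← diag_sum, Finset.mul_sum, ← Finset.sum_sub_distrib]
  apply Finset.dvd_sum
  intro i hi
  have h2 : qps n * ((-1)^(n+i) * (gq (2*n) i * X^(e n i))) - (-1)^(n+i)*X^(e n i)
      = (-1)^(n+i) * (qps n * (gq (2*n) i * X^(e n i)) - X^(e n i)) := by ring
  rw [h2]
  exact Dvd.dvd.mul_left (main_approx (by rw [Finset.mem_range] at hi; omega)) _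



lemma prod_split (h : ℕ → PowerSeries ℤ) (n : ℕ) :
    ∏ k ∈ Icc 1 (2*n), h k
      = (∏ k ∈ Icc 1 n, h (2*k)) * ∏ k ∈ Icc 1 n, h (2*k-1) := by
  induction n with
  | zero => simp
  | succ n ih =>
    rw [show 2*(n+1) = (2*n+1)+1 by omega, Finset.prod_Icc_succ_top (by omega),
      Finset.prod_Icc_succ_top (by omega), ih,
      Finset.prod_Icc_succ_top (by omega : 1 ≤ n+1),
      Finset.prod_Icc_succ_top (by omega : 1 ≤ n+1)]
    rw [show 2*(n+1)-1 = 2*n+1 by omega, show 2*(n+1) = 2*n+1+1 by omega]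
    ring

lemma gauss_fps (n : ℕ) :
    (X:PowerSeries ℤ)^(2*n+1) ∣ (∏ k ∈ Icc 1 (2*n), fps k) * Θ n - 1 := by
  set P1 : PowerSeries ℤ := ∏ k ∈ Icc 1 (2*n), (1 + X^k) with hP1
  set Pm : PowerSeries ℤ := ∏ k ∈ Icc 1 (2*n), (1 - X^k) with hPm
  set Inv : PowerSeries ℤ := ∏ k ∈ Icc 1 (2*n), inv1 ℤ k with hInv
  set Dodd : PowerSeries ℤ := ∏ k ∈ Icc 1 n, (1 - X^(2*k-1)) with hDodd
  set Rx : PowerSeries ℤ := ∏ k ∈ Ioc n (2*n), (1 - X^(2*k)) with hRx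
  have h0 : (∏ k ∈ Icc 1 (2*n), fps k) = P1 * Inv := by
    rw [hP1, hInv, ← Finset.prod_mul_distrib]
    rfl
  have hPmInv : Pm * Inv = 1 := by
    rw [hPm, hInv, ← Finset.prod_mul_distrib]
    apply Finset.prod_eq_one
    intro k hk
    rw [Finset.mem_Icc] at hk
    exact one_sub_mul_inv1 k (by omega)
  have hPmsplit : Pm = qps n * Dodd := prod_split (fun k => 1 - X^k) n
  have hP1Pm : P1 * Pm = ∏ k ∈ Icc 1 (2*n), (1 - X^(2*k)) := by
    rw [hP1, hPm, ← Finset.prod_mul_distrib]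
    apply Finset.prod_congr rfl
    intro k _
    rw [show 2*k = k + k by omega, pow_add]
    ring
  have hful : (∏ k ∈ Icc 1 (2*n), (1 - X^(2*k) : PowerSeries ℤ)) = qps n * Rx := by
    rw [qps, show Icc 1 (2*n) = Ioc 0 (2*n) from rfl, show Icc 1 n = Ioc 0 n from rfl,
      ← Finset.prod_Ioc_consecutive _ (Nat.zero_le n) (by omega : n ≤ 2*n)]
  have hRx1 : (X:PowerSeries ℤ)^(2*n+1) ∣ Rx - 1 := by
    apply modX_prod_one
    intro k hk
    rw [Finset.mem_Ioc] at hk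
    have : (1 - X^(2*k) : PowerSeries ℤ) - 1 = -(X^(2*k)) := by ring
    rw [this, dvd_neg]
    exact pow_dvd_pow X (by omega)
  have hDodd2 : (∏ k ∈ Icc 1 n, ((1 - X^(2*k-1))^2 : PowerSeries ℤ)) = Dodd * Dodd := by
    rw [hDodd, ← Finset.prod_mul_distrib]
    apply Finset.prod_congr rfl
    intro k _
    ring
  have step1 : (X:PowerSeries ℤ)^(2*n+1) ∣
      (∏ k ∈ Icc 1 (2*n), fps k) * Θ n - (∏ k ∈ Icc 1 (2*n), fps k) * (qps n * (Dodd * Dodd)) := by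
    have hg := gauss_core n
    rw [hDodd2] at hg
    have : (∏ k ∈ Icc 1 (2*n), fps k) * Θ n
        - (∏ k ∈ Icc 1 (2*n), fps k) * (qps n * (Dodd * Dodd))
        = -((∏ k ∈ Icc 1 (2*n), fps k) * (qps n * (Dodd * Dodd) - Θ n)) := by ring
    rw [this, dvd_neg]
    exact hg.mul_left _
  have step2 : (∏ k ∈ Icc 1 (2*n), fps k) * (qps n * (Dodd * Dodd)) = Rx := by
    rw [h0]
    calc P1 * Inv * (qps n * (Dodd * Dodd))
        = (Inv * Dodd) * (P1 * (qps n * Dodd)) := by ring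
      _ = (Inv * Dodd) * (P1 * Pm) := by rw [← hPmsplit]
      _ = (Inv * Dodd) * (qps n * Rx) := by rw [hP1Pm, hful]
      _ = (qps n * Dodd) * Inv * Rx := by ring
      _ = Pm * Inv * Rx := by rw [← hPmsplit]
      _ = Rx := by rw [hPmInv, one_mul]
  rw [step2] at step1
  exact modX_trans step1 hRx1

section RingA
variable {A : Type*} [CommRing A]

noncomputable def fpsA (A : Type*) [CommRing A] (k : ℕ) : PowerSeries A :=
  (1 + X^k) * inv1 A k

noncomputable def ΘA (A : Type*) [CommRing A] (n : ℕ) : PowerSeries A :=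
  1 + 2 * ∑ s ∈ Icc 1 n, (-1)^s * X^(s^2)

noncomputable def π (A : Type*) [CommRing A] : PowerSeries ℤ →+* PowerSeries A :=
  PowerSeries.map (Int.castRingHom A)

lemma π_X : π A X = X := PowerSeries.map_X _

lemma map_fps {k : ℕ} (hk : k ≠ 0) : π A (fps k) = fpsA A k := by
  have h := congrArg (π A) (one_sub_mul_inv1 (A := ℤ) k hk)
  simp only [map_mul, map_sub, map_one, map_pow, π_X] at h
  rw [fps, fpsA, map_mul]
  congr 1
  · rw [map_add, map_one, map_pow, π_X]
  · exact inv_unique h (one_sub_mul_inv1 k hk)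
  
lemma map_Θ (n : ℕ) : π A (Θ n) = ΘA A n := by
  rw [Θ, ΘA, map_add, map_one, map_mul, map_sum]
  congr 1
  · congr 1
    · exact map_ofNat _ 2
    · apply Finset.sum_congr rfl
      intro s _
      rw [map_mul, map_pow, map_neg, map_one, map_pow, π_X]

lemma gauss_ring (n : ℕ) :
    (X:PowerSeries A)^(2*n+1) ∣ (∏ k ∈ Icc 1 (2*n), fpsA A k) * ΘA A n - 1 := by
  have h := map_dvd (π A) (gauss_fps n)
  rw [map_sub, map_one, map_mul, map_pow, π_X, map_Θ, map_prod] at h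
  rw [Finset.prod_congr rfl (fun k hk => map_fps (A := A)
    (by rw [Finset.mem_Icc] at hk; omega))] at h
  exact h

end RingA

section Coeffs
variable {A : Type*} [CommRing A]

noncomputable def PbA (A : Type*) [CommRing A] (M : ℕ) : PowerSeries A :=
  ∏ k ∈ Icc 1 M, fpsA A k

lemma fpsA_sub_one {k : ℕ} (hk : k ≠ 0) :
    fpsA A k - 1 = X^k * (2 * inv1 A k) := by
  have h := one_sub_mul_inv1 (A := A) k hk
  calc fpsA A k - 1 = (1 + X^k) * inv1 A k - (1 - X^k) * inv1 A k := by rw [h, fpsA]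
    _ = X^k * (2 * inv1 A k) := by ring

lemma coeff_PbA_trunc {i M : ℕ} (h : i ≤ M) :
    coeff (R := A) i (PbA A M) = coeff (R := A) i (PbA A i) := by
  have hsplit : PbA A M = PbA A i * ∏ k ∈ Ioc i M, fpsA A k := by
    rw [PbA, PbA, show Icc 1 M = Ioc 0 M from rfl, show Icc 1 i = Ioc 0 i from rfl,
      ← Finset.prod_Ioc_consecutive _ (Nat.zero_le i) h]
  have h1 : (X:PowerSeries A)^(i+1) ∣ (∏ k ∈ Ioc i M, fpsA A k) - 1 := by
    apply modX_prod_one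
    intro k hk
    rw [Finset.mem_Ioc] at hk
    rw [fpsA_sub_one (by omega)]
    exact Dvd.dvd.mul_right (pow_dvd_pow X (by omega)) _
  have h2 : (X:PowerSeries A)^(i+1) ∣ PbA A M - PbA A i := by
    rw [hsplit]
    have h3 : PbA A i * (∏ k ∈ Ioc i M, fpsA A k) - PbA A i
        = ((∏ k ∈ Ioc i M, fpsA A k) - 1) * PbA A i := by ring
    rw [h3]
    exact h1.mul_right _
  exact modX_coeff h2 (by omega)

lemma pbar_cast (i : ℕ) : ((pbar i : ℤ) : A) = coeff (R := A) i (PbA A i) := by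
  rw [pbar]
  have h : PbA A i = π A (∏ k ∈ Icc 1 i, fps k) := by
    rw [map_prod, PbA]
    exact (Finset.prod_congr rfl (fun k hk => (map_fps
      (by rw [Finset.mem_Icc] at hk; omega)).symm))
  rw [h, π, PowerSeries.coeff_map]
  rfl

lemma pbar_coeff {i M : ℕ} (h : i ≤ M) : coeff (R := A) i (PbA A M) = ((pbar i : ℤ) : A) := by
  rw [coeff_PbA_trunc h, pbar_cast]

lemma two_eq_C (A : Type*) [CommRing A] : (2 : PowerSeries A) = C (R := A) 2 :=
  (map_ofNat (C (R := A)) 2).symm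

lemma fpsA_zmod2 (k : ℕ) (hk : k ≠ 0) : fpsA (ZMod 2) k = 1 := by
  have h2 : (1 + X^k : PowerSeries (ZMod 2)) = 1 - X^k := by
    have h3 : (1 + X^k : PowerSeries (ZMod 2)) - (1 - X^k) = C (R := (ZMod 2)) 2 * X^k := by
      rw [← two_eq_C]
      ring
    have h4 : (C (R := (ZMod 2))) (2 : ZMod 2) = 0 := by
      rw [show (2 : ZMod 2) = 0 from rfl, map_zero]
    rw [h4, zero_mul] at h3
    exact sub_eq_zero.mp h3
  rw [fpsA, h2, one_sub_mul_inv1 k hk]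

lemma pbar_even {i : ℕ} (hi : i ≠ 0) : 2 ∣ pbar i := by
  have h := pbar_cast (A := ZMod 2) i
  rw [PbA, Finset.prod_congr rfl (fun k hk => fpsA_zmod2 k
    (by rw [Finset.mem_Icc] at hk; omega)), Finset.prod_const_one,
    PowerSeries.coeff_one, if_neg hi] at h
  exact_mod_cast (ZMod.intCast_zmod_eq_zero_iff_dvd (pbar i) 2).mp h

lemma sq_mod8 (s : ℕ) : s^2 % 8 = 0 ∨ s^2 % 8 = 1 ∨ s^2 % 8 = 4 := by
  have h := Nat.pow_mod s 2 8
  have h8 : s % 8 = 0 ∨ s % 8 = 1 ∨ s % 8 = 2 ∨ s % 8 = 3 ∨ s % 8 = 4 ∨ s % 8 = 5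
      ∨ s % 8 = 6 ∨ s % 8 = 7 := by omega
  rcases h8 with h8|h8|h8|h8|h8|h8|h8|h8 <;> rw [h8] at h <;> norm_num at h <;> omega

lemma sq_mod4 (s : ℕ) : s^2 % 4 = 0 ∨ s^2 % 4 = 1 := by
  have h := Nat.pow_mod s 2 4
  have h4 : s % 4 = 0 ∨ s % 4 = 1 ∨ s % 4 = 2 ∨ s % 4 = 3 := by omega
  rcases h4 with h4|h4|h4|h4 <;> rw [h4] at h <;> norm_num at h <;> omega

lemma sq_parity (s : ℕ) : s^2 % 2 = s % 2 := by
  have h := Nat.pow_mod s 2 2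
  have h2 : s % 2 = 0 ∨ s % 2 = 1 := by omega
  rcases h2 with h2|h2 <;> rw [h2] at h <;> norm_num at h <;> omega

noncomputable def SA (A : Type*) [CommRing A] (N : ℕ) : PowerSeries A :=
  ∑ s ∈ Icc 1 N, (-1)^s * X^(s^2)

lemma ΘA_eq (n : ℕ) : ΘA A n = 1 + 2 * SA A n := rfl

lemma coeff_term (s k i : ℕ) :
    coeff (R := A) i ((-1)^s * X^k : PowerSeries A) = if i = k then (-1)^s else 0 := by
  rw [show ((-1 : PowerSeries A))^s = C (R := A) ((-1)^s) by rw [map_pow, map_neg, map_one],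
    PowerSeries.coeff_C_mul, PowerSeries.coeff_X_pow]
  split_ifs <;> simp

lemma coeff_SA_nonsquare {N i : ℕ} (h : ∀ s : ℕ, s^2 ≠ i) :
    coeff (R := A) i (SA A N) = 0 := by
  rw [SA, map_sum]
  apply Finset.sum_eq_zero
  intro s _
  rw [coeff_term, if_neg (fun hh => h s hh.symm)]

lemma coeff_SA_square {N t : ℕ} (h1 : 1 ≤ t) (htN : t ≤ N) :
    coeff (R := A) (t^2) (SA A N) = (-1)^t := by
  rw [SA, map_sum]
  rw [Finset.sum_eq_single t]
  · rw [coeff_term, if_pos rfl]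
  · intro s _ hst
    rw [coeff_term, if_neg (fun hh => hst (Nat.pow_left_injective (by omega) hh.symm))]
  · intro hh
    exact absurd (Finset.mem_Icc.mpr ⟨h1, htN⟩) hh

lemma four_eq_zero_zmod4 : (4 : PowerSeries (ZMod 4)) = 0 := by
  calc (4 : PowerSeries (ZMod 4)) = C (R := (ZMod 4)) 4 := (map_ofNat (C (R := (ZMod 4))) 4).symm
    _ = 0 := by rw [show (4 : ZMod 4) = 0 from rfl, map_zero]

lemma eight_eq_zero_zmod8 : (8 : PowerSeries (ZMod 8)) = 0 := by
  calc (8 : PowerSeries (ZMod 8)) = C (R := (ZMod 8)) 8 := (map_ofNat (C (R := (ZMod 8))) 8).symm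
    _ = 0 := by rw [show (8 : ZMod 8) = 0 from rfl, map_zero]

lemma pbar_approx_theta {m : ℕ} {G : PowerSeries A}
    (hG : ΘA A m * G = 1) (hm : 1 ≤ m) :
    ((pbar m : ℤ) : A) = coeff (R := A) m G := by
  have hg := gauss_ring (A := A) m
  have h2 : (X:PowerSeries A)^(2*m+1) ∣
      (∏ k ∈ Icc 1 (2*m), fpsA A k) * (ΘA A m * G) - G := by
    have h4 := hg.mul_right G
    have h5 : ((∏ k ∈ Icc 1 (2*m), fpsA A k) * ΘA A m - 1) * G
        = (∏ k ∈ Icc 1 (2*m), fpsA A k) * (ΘA A m * G) - G := by ring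
    rwa [h5] at h4
  rw [hG, mul_one] at h2
  have hco := modX_coeff h2 (by omega : m < 2*m+1)
  rw [← pbar_coeff (A := A) (by omega : m ≤ 2*m), PbA]
  exact hco

lemma pbar_mod4 {i : ℕ} (hodd : i % 2 = 1) :
    ((pbar i : ℤ) : ZMod 4) = if IsSquare i then (2:ZMod 4) else 0 := by
  have hi1 : (1:ℕ) ≤ i := by omega
  have hsq : ΘA (ZMod 4) i * ΘA (ZMod 4) i = 1 := by
    rw [ΘA_eq]
    have h : (1 + 2*SA (ZMod 4) i) * (1 + 2*SA (ZMod 4) i)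
        = 1 + 4 * (SA (ZMod 4) i + SA (ZMod 4) i * SA (ZMod 4) i) := by ring
    rw [h, four_eq_zero_zmod4]
    ring
  rw [pbar_approx_theta hsq hi1, ΘA_eq, map_add, PowerSeries.coeff_one,
    if_neg (by omega : ¬ i = 0), two_eq_C, PowerSeries.coeff_C_mul]
  by_cases hsqi : IsSquare i
  · obtain ⟨t, ht⟩ := hsqi
    have ht2 : t^2 = i := by rw [ht]; ring
    have h1t : 1 ≤ t := by
      rcases Nat.eq_zero_or_pos t with rfl | h
      · simp at ht; omega
      · exact h
    have htN : t ≤ i := le_trans (Nat.le_mul_of_pos_left t (by omega)) (le_of_eq ht.symm)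
    rw [if_pos ⟨t, ht⟩, ← ht2, coeff_SA_square h1t (by omega)]
    rcases Nat.even_or_odd t with he | he
    · rw [he.neg_one_pow]
      norm_num
    · rw [he.neg_one_pow]
      decide
  · rw [coeff_SA_nonsquare (fun s hs => hsqi ⟨s, by rw [← hs]; ring⟩), if_neg hsqi]
    ring

lemma card_even_T {m : ℕ} (hm : m % 2 = 1) :
    ∃ c, (Finset.filter (fun p : ℕ × ℕ => m = p.1^2 + p.2^2)
      (Icc 1 m ×ˢ Icc 1 m)).card = 2*c := by
  set T := Finset.filter (fun p : ℕ × ℕ => m = p.1^2 + p.2^2) (Icc 1 m ×ˢ Icc 1 m) with hT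
  set T1 := T.filter (fun p => p.1 < p.2) with hT1
  set T2 := T.filter (fun p => p.2 < p.1) with hT2
  have hunion : T = T1 ∪ T2 := by
    ext p
    simp only [hT1, hT2, Finset.mem_union, Finset.mem_filter]
    constructor
    · intro hp
      have hne : p.1 ≠ p.2 := by
        intro he
        have hp' := hp
        rw [hT, Finset.mem_filter] at hp'
        have hp2 : m = p.1^2 + p.2^2 := hp'.2
        rw [← he] at hp2
        omega
      rcases lt_or_gt_of_ne hne with h|h
      · exact Or.inl ⟨hp, h⟩
      · exact Or.inr ⟨hp, h⟩
    · rintro (⟨hp,_⟩|⟨hp,_⟩) <;> exact hp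
  have hdisj : Disjoint T1 T2 := by
    rw [Finset.disjoint_left]
    rintro p hp1 hp2
    rw [hT1, Finset.mem_filter] at hp1
    rw [hT2, Finset.mem_filter] at hp2
    omega
  have hmemT : ∀ p : ℕ × ℕ, p ∈ T ↔ (p.1 ∈ Icc 1 m ∧ p.2 ∈ Icc 1 m ∧ m = p.1^2 + p.2^2) := by
    intro p
    rw [hT, Finset.mem_filter, Finset.mem_product]
    tauto
  have hbij : T1.card = T2.card := by
    apply Finset.card_bij (fun p _ => (p.2, p.1))
    · rintro ⟨a,b⟩ hp
      rw [hT1, Finset.mem_filter] at hp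
      rw [hT2, Finset.mem_filter]
      obtain ⟨hpT, hlt⟩ := hp
      rw [hmemT] at hpT
      obtain ⟨ha, hb, heq⟩ := hpT
      dsimp only at ha hb heq hlt ⊢
      refine ⟨(hmemT (b,a)).mpr ⟨hb, ha, by dsimp only; omega⟩, hlt⟩
    · rintro ⟨a,b⟩ h1 ⟨c,d⟩ h2 he
      have e1 := congrArg Prod.fst he
      have e2 := congrArg Prod.snd he
      simp only at e1 e2
      rw [Prod.ext_iff]
      exact ⟨e2, e1⟩
    · rintro ⟨a,b⟩ hp
      refine ⟨(b,a), ?_, rfl⟩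
      rw [hT2, Finset.mem_filter] at hp
      rw [hT1, Finset.mem_filter]
      obtain ⟨hpT, hlt⟩ := hp
      rw [hmemT] at hpT
      obtain ⟨ha, hb, heq⟩ := hpT
      dsimp only at ha hb heq hlt ⊢
      refine ⟨(hmemT (b,a)).mpr ⟨hb, ha, by dsimp only; omega⟩, hlt⟩
  refine ⟨T1.card, ?_⟩
  rw [hunion, Finset.card_union_of_disjoint hdisj, hbij]
  omega

lemma pbar_mod8 {m : ℕ} (hm : m % 8 = 5) : ((pbar m : ℤ) : ZMod 8) = 0 := by
  set S := SA (ZMod 8) m with hS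
  have hinv : ΘA (ZMod 8) m * (1 - 2*S + 4*S^2) = 1 := by
    rw [ΘA_eq, ← hS]
    have h : (1 + 2*S) * (1 - 2*S + 4*S^2) = 1 + 8*S^3 := by ring
    rw [h, eight_eq_zero_zmod8]
    ring
  rw [pbar_approx_theta hinv (by omega)]
  rw [map_add, map_sub, PowerSeries.coeff_one, if_neg (by omega : ¬ m = 0)]
  have hnos : ∀ s : ℕ, s^2 ≠ m := by
    intro s hs
    have := sq_mod8 s
    rw [hs] at this
    omega
  rw [two_eq_C, PowerSeries.coeff_C_mul, hS, coeff_SA_nonsquare hnos, mul_zero]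
  have hfour : (4 : PowerSeries (ZMod 8)) = C (R := (ZMod 8)) 4 := (map_ofNat (C (R := (ZMod 8))) 4).symm
  rw [hfour, PowerSeries.coeff_C_mul]
  -- coefficient of S^2
  have hSS : coeff (R := (ZMod 8)) m (S^2)
      = ∑ p ∈ Icc 1 m ×ˢ Icc 1 m, (if m = p.1^2 + p.2^2 then (-1:ZMod 8) else 0) := by
    rw [pow_two, hS, SA, Finset.sum_mul_sum]
    rw [map_sum]
    rw [Finset.sum_product]
    apply Finset.sum_congr rfl
    intro s hs
    rw [map_sum]
    apply Finset.sum_congr rfl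
    intro t ht
    have hterm : ((-1)^s * X^(s^2) : PowerSeries (ZMod 8)) * ((-1)^t * X^(t^2))
        = (-1)^(s+t) * X^(s^2 + t^2) := by
      rw [pow_add, pow_add]
      ring
    rw [hterm, coeff_term]
    rcases em (m = s^2 + t^2) with hcase | hcase
    · rw [if_pos hcase, if_pos hcase]
      have hodd : (s + t) % 2 = 1 := by
        have h1 := sq_parity s
        have h2 := sq_parity t
        omega
      exact Odd.neg_one_pow ⟨(s+t)/2, by omega⟩
    · rw [if_neg hcase, if_neg hcase]
  obtain ⟨c, hc⟩ := card_even_T (show m % 2 = 1 by omega)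
  rw [hSS, ← Finset.sum_filter, Finset.sum_const, hc]
  have : ((2*c) • (-1 : ZMod 8)) = (2*(c:ℕ) : ℕ) * (-1 : ZMod 8) := by
    rw [nsmul_eq_mul]
  rw [this]
  push_cast
  have h8 : (8 : ZMod 8) = 0 := rfl
  linear_combination (-(c : ZMod 8)) * h8

end Coeffs

section Final

noncomputable def T2 : PowerSeries (ZMod 8) := X^2 * inv1 (ZMod 8) 2
noncomputable def T4 : PowerSeries (ZMod 8) := X^4 * inv1 (ZMod 8) 4
noncomputable def VV : PowerSeries (ZMod 8) := X^3 * (inv1 (ZMod 8) 3 * inv1 (ZMod 8) 3)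
noncomputable def WW : PowerSeries (ZMod 8) := X^4 * (inv1 (ZMod 8) 4 * inv1 (ZMod 8) 4)
noncomputable def KK : PowerSeries (ZMod 8) := VV + WW + T2*T4

lemma four_eq_C8 : (4 : PowerSeries (ZMod 8)) = C (R := (ZMod 8)) 4 := (map_ofNat (C (R := (ZMod 8))) 4).symm

lemma fpsA_two : fpsA (ZMod 8) 2 = 1 + 2*T2 := by
  have h := fpsA_sub_one (A := ZMod 8) (k := 2) (by omega)
  rw [T2]
  calc fpsA (ZMod 8) 2 = (fpsA (ZMod 8) 2 - 1) + 1 := by ring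
    _ = 1 + 2*(X^2 * inv1 (ZMod 8) 2) := by rw [h]; ring

lemma fpsA_four : fpsA (ZMod 8) 4 = 1 + 2*T4 := by
  have h := fpsA_sub_one (A := ZMod 8) (k := 4) (by omega)
  rw [T4]
  calc fpsA (ZMod 8) 4 = (fpsA (ZMod 8) 4 - 1) + 1 := by ring
    _ = 1 + 2*(X^4 * inv1 (ZMod 8) 4) := by rw [h]; ring

lemma fpsA_sq (k : ℕ) (hk : k ≠ 0) :
    fpsA (ZMod 8) k ^ 2 = 1 + 4 * (X^k * (inv1 (ZMod 8) k * inv1 (ZMod 8) k)) := by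
  have h := one_sub_mul_inv1 (A := ZMod 8) k hk
  have hh : ((1 + X^k : PowerSeries (ZMod 8)))^2 = (1 - X^k)^2 + 4*X^k := by ring
  calc fpsA (ZMod 8) k ^ 2 = (1+X^k)^2 * (inv1 (ZMod 8) k * inv1 (ZMod 8) k) := by
        rw [fpsA]; ring
    _ = ((1-X^k) * inv1 (ZMod 8) k)^2 + 4 * (X^k * (inv1 (ZMod 8) k * inv1 (ZMod 8) k)) := by
        rw [hh]; ring
    _ = 1 + 4 * (X^k * (inv1 (ZMod 8) k * inv1 (ZMod 8) k)) := by rw [h]; ring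

lemma fpsA_pow_four {k : ℕ} (hk : k ≠ 0) : fpsA (ZMod 8) k ^ 4 = 1 := by
  have h := one_sub_mul_inv1 (A := ZMod 8) k hk
  have hd : ((1+X^k : PowerSeries (ZMod 8)))^4 = (1-X^k)^4 := by
    linear_combination (X^k + (X^k)^3) * eight_eq_zero_zmod8
  calc fpsA (ZMod 8) k ^ 4 = (1+X^k)^4 * (inv1 (ZMod 8) k)^4 := by rw [fpsA]; ring
    _ = ((1-X^k) * inv1 (ZMod 8) k)^4 := by rw [hd]; ring
    _ = 1 := by rw [h, one_pow]

lemma E_expansion :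
    fpsA (ZMod 8) 2 * fpsA (ZMod 8) 3^2 * fpsA (ZMod 8) 4^3
      = 1 + 2*T2 + 2*T4 + 4*KK := by
  have h3 : fpsA (ZMod 8) 3 ^ 2 = 1 + 4*VV := by rw [fpsA_sq 3 (by omega)]; rfl
  have h4 : fpsA (ZMod 8) 4 ^ 2 = 1 + 4*WW := by rw [fpsA_sq 4 (by omega)]; rfl
  have h43 : fpsA (ZMod 8) 4 ^ 3 = (1 + 4*WW) * (1 + 2*T4) := by
    rw [← h4, ← fpsA_four]; ring
  rw [fpsA_two, h3, h43, KK]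
  linear_combination (2*VV*WW + (T2+T4+2*T2*T4)*(VV+WW+4*VV*WW)) * eight_eq_zero_zmod8

lemma coeff_T2 (j : ℕ) :
    coeff (R := (ZMod 8)) j T2 = if 2 ∣ j ∧ j ≠ 0 then 1 else 0 := by
  rcases le_or_gt 2 j with h | h
  · have h1 : coeff (R := (ZMod 8)) j T2 = coeff (R := (ZMod 8)) (j-2) (inv1 (ZMod 8) 2) := by
      conv_lhs => rw [T2, show j = (j-2)+2 by omega]
      exact coeff_X_pow_mul _ _ _
    rw [h1, coeff_inv1 2 _ (by omega)]
    by_cases hd : 2 ∣ j - 2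
    · rw [if_pos hd, if_pos ⟨by omega, by omega⟩]
    · rw [if_neg hd, if_neg (fun hh => hd (by omega))]
  · have h1 : coeff (R := (ZMod 8)) j T2 = 0 := by
      rw [T2]
      exact X_pow_dvd_iff.mp (dvd_mul_right _ _) j h
    rw [h1, if_neg (fun hh => by omega)]

lemma coeff_T4 (j : ℕ) :
    coeff (R := (ZMod 8)) j T4 = if 4 ∣ j ∧ j ≠ 0 then 1 else 0 := by
  rcases le_or_gt 4 j with h | h
  · have h1 : coeff (R := (ZMod 8)) j T4 = coeff (R := (ZMod 8)) (j-4) (inv1 (ZMod 8) 4) := by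
      conv_lhs => rw [T4, show j = (j-4)+4 by omega]
      exact coeff_X_pow_mul _ _ _
    rw [h1, coeff_inv1 4 _ (by omega)]
    by_cases hd : 4 ∣ j - 4
    · rw [if_pos hd, if_pos ⟨by omega, by omega⟩]
    · rw [if_neg hd, if_neg (fun hh => hd (by omega))]
  · have h1 : coeff (R := (ZMod 8)) j T4 = 0 := by
      rw [T4]
      exact X_pow_dvd_iff.mp (dvd_mul_right _ _) j h
    rw [h1, if_neg (fun hh => by omega)]

lemma coeff_KK (m : ℕ) (hm2 : m % 2 = 1) (hm3 : m % 3 = 2) :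
    coeff (R := (ZMod 8)) m KK = 0 := by
  have hm5 : 5 ≤ m := by omega
  have hV : coeff (R := (ZMod 8)) m VV = 0 := by
    have h1 : coeff (R := (ZMod 8)) m VV
        = coeff (R := (ZMod 8)) (m-3) (inv1 (ZMod 8) 3 * inv1 (ZMod 8) 3) := by
      conv_lhs => rw [VV, show m = (m-3)+3 by omega]
      exact coeff_X_pow_mul _ _ _
    rw [h1, PowerSeries.coeff_mul]
    apply Finset.sum_eq_zero
    rintro ⟨a,b⟩ hab
    rw [Finset.HasAntidiagonal.mem_antidiagonal] at hab
    rw [coeff_inv1 3 _ (by omega), coeff_inv1 3 _ (by omega)]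
    by_cases hda : 3 ∣ a
    · by_cases hdb : 3 ∣ b
      · exfalso
        obtain ⟨u, hu⟩ := hda
        obtain ⟨v, hv⟩ := hdb
        omega
      · rw [if_neg hdb, mul_zero]
    · rw [if_neg hda, zero_mul]
  have hW : coeff (R := (ZMod 8)) m WW = 0 := by
    have h1 : coeff (R := (ZMod 8)) m WW
        = coeff (R := (ZMod 8)) (m-4) (inv1 (ZMod 8) 4 * inv1 (ZMod 8) 4) := by
      conv_lhs => rw [WW, show m = (m-4)+4 by omega]
      exact coeff_X_pow_mul _ _ _
    rw [h1, PowerSeries.coeff_mul]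
    apply Finset.sum_eq_zero
    rintro ⟨a,b⟩ hab
    rw [Finset.HasAntidiagonal.mem_antidiagonal] at hab
    rw [coeff_inv1 4 _ (by omega), coeff_inv1 4 _ (by omega)]
    by_cases hda : 4 ∣ a
    · by_cases hdb : 4 ∣ b
      · exfalso
        obtain ⟨u, hu⟩ := hda
        obtain ⟨v, hv⟩ := hdb
        omega
      · rw [if_neg hdb, mul_zero]
    · rw [if_neg hda, zero_mul]
  have hTT : coeff (R := (ZMod 8)) m (T2*T4) = 0 := by
    rw [PowerSeries.coeff_mul]
    apply Finset.sum_eq_zero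
    rintro ⟨a,b⟩ hab
    rw [Finset.HasAntidiagonal.mem_antidiagonal] at hab
    rw [coeff_T2, coeff_T4]
    by_cases hda : 2 ∣ a ∧ a ≠ 0
    · by_cases hdb : 4 ∣ b ∧ b ≠ 0
      · exfalso
        obtain ⟨⟨u, hu⟩, _⟩ := hda
        obtain ⟨⟨v, hv⟩, _⟩ := hdb
        omega
      · rw [if_neg hdb, mul_zero]
    · rw [if_neg hda, zero_mul]
  rw [KK, map_add, map_add, hV, hW, hTT]
  ring

lemma prod_Icc14 (f : ℕ → PowerSeries (ZMod 8)) :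
    ∏ k ∈ Icc 1 4, f k = f 1 * f 2 * f 3 * f 4 := by
  rw [show (4:ℕ) = 3+1 from rfl, Finset.prod_Icc_succ_top (by omega),
    show (3:ℕ) = 2+1 from rfl, Finset.prod_Icc_succ_top (by omega),
    show (2:ℕ) = 1+1 from rfl, Finset.prod_Icc_succ_top (by omega),
    Finset.Icc_self, Finset.prod_singleton]

lemma plbark_split (m : ℕ) (hm : 5 ≤ m) :
    ∏ k ∈ Icc 1 m, fpsA (ZMod 8) k ^ (min 5 k)
      = PbA (ZMod 8) m * (fpsA (ZMod 8) 2 * fpsA (ZMod 8) 3^2 * fpsA (ZMod 8) 4^3) := by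
  have hsplit : ∀ g : ℕ → PowerSeries (ZMod 8),
      ∏ k ∈ Icc 1 m, g k = (∏ k ∈ Icc 1 4, g k) * ∏ k ∈ Ioc 4 m, g k := by
    intro g
    rw [show Icc 1 m = Ioc 0 m from rfl, show Icc 1 4 = Ioc 0 4 from rfl,
      ← Finset.prod_Ioc_consecutive _ (Nat.zero_le 4) (by omega : 4 ≤ m)]
  rw [hsplit (fun k => fpsA (ZMod 8) k ^ (min 5 k)), PbA, hsplit (fpsA (ZMod 8))]
  have h14 : ∀ k ∈ Icc 1 4, fpsA (ZMod 8) k ^ (min 5 k) = fpsA (ZMod 8) k ^ k := by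
    intro k hk
    rw [Finset.mem_Icc] at hk
    rw [min_eq_right (by omega)]
  have hs5 : ∀ k ∈ Ioc 4 m, fpsA (ZMod 8) k ^ (min 5 k) = fpsA (ZMod 8) k := by
    intro k hk
    rw [Finset.mem_Ioc] at hk
    rw [min_eq_left (by omega), show (5:ℕ) = 4+1 from rfl, pow_succ,
      fpsA_pow_four (by omega), one_mul]
  rw [Finset.prod_congr rfl h14, Finset.prod_congr rfl hs5, prod_Icc14, prod_Icc14]
  ring

lemma two_mul_zero_of_cast4 (x : ZMod 8)
    (h : (ZMod.castHom (by norm_num : (4:ℕ) ∣ 8) (ZMod 4)) x = 0) : 2 * x = 0 := by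
  revert x
  decide

end Final

end POP

open Finset PowerSeries in
/-- For all `α ≥ 3`, `β ≥ 1`, `n ≥ 0`, `pl̄₅(2^α·3^β·n + 5) ≡ 0 (mod 8)`. -/
theorem plbark_five_family_mod_eight (α β n : ℕ) (hα : 3 ≤ α) (hβ : 1 ≤ β) :
    plbark 5 (2 ^ α * 3 ^ β * n + 5) ≡ 0 [ZMOD 8] := by
  have h2 : 2^α = 8 * 2^(α-3) := by
    rw [show (8:ℕ) = 2^3 from rfl, ← pow_add]
    congr 1
    omega
  have h3 : 3^β = 3 * 3^(β-1) := by
    rw [show 3*3^(β-1) = 3^(1+(β-1)) by rw [pow_add, pow_one]]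
    congr 1
    omega
  set m := 2^α*3^β*n + 5 with hmdef
  obtain ⟨t, ht⟩ : ∃ t, m = 24*t + 5 :=
    ⟨2^(α-3)*3^(β-1)*n, by rw [hmdef, h2, h3]; ring⟩
  have hm8 : m % 8 = 5 := by omega
  have hm2 : m % 2 = 1 := by omega
  have hm3 : m % 3 = 2 := by omega
  have hm4 : m % 4 = 1 := by omega
  have hm5 : 5 ≤ m := by omega
  have hzero : ((plbark 5 m : ℤ) : ZMod 8) = 0 := by
    have hcast : ((plbark 5 m : ℤ) : ZMod 8)
        = coeff (R := (ZMod 8)) m (∏ k ∈ Icc 1 m, POP.fpsA (ZMod 8) k ^ min 5 k) := by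
      rw [plbark]
      have hmap : (∏ k ∈ Icc 1 m, POP.fpsA (ZMod 8) k ^ min 5 k)
          = POP.π (ZMod 8) (∏ k ∈ Icc 1 m, fps k ^ min 5 k) := by
        rw [map_prod]
        apply Finset.prod_congr rfl
        intro k hk
        rw [map_pow, POP.map_fps (by rw [Finset.mem_Icc] at hk; omega)]
      rw [hmap, POP.π, PowerSeries.coeff_map]
      rfl
    rw [hcast, POP.plbark_split m hm5, POP.E_expansion]
    have hexp : POP.PbA (ZMod 8) m * (1 + 2*POP.T2 + 2*POP.T4 + 4*POP.KK)
        = POP.PbA (ZMod 8) m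
          + C (R := (ZMod 8)) 2 * (POP.PbA (ZMod 8) m * POP.T2 + POP.PbA (ZMod 8) m * POP.T4)
          + C (R := (ZMod 8)) 4 * (POP.PbA (ZMod 8) m * POP.KK) := by
      rw [← POP.two_eq_C, ← POP.four_eq_C8]
      ring
    rw [hexp, map_add, map_add, PowerSeries.coeff_C_mul, PowerSeries.coeff_C_mul, map_add]
    have p0 : coeff (R := (ZMod 8)) m (POP.PbA (ZMod 8) m) = 0 := by
      rw [POP.pbar_coeff (le_refl m), POP.pbar_mod8 hm8]
    have pK : (4:ZMod 8) * coeff (R := (ZMod 8)) m (POP.PbA (ZMod 8) m * POP.KK) = 0 := by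
      rw [PowerSeries.coeff_mul, Finset.mul_sum]
      apply Finset.sum_eq_zero
      rintro ⟨a,b⟩ hab
      rw [Finset.HasAntidiagonal.mem_antidiagonal] at hab
      rcases Nat.eq_zero_or_pos a with rfl | ha
      · rw [show b = m by omega, POP.coeff_KK m hm2 hm3, mul_zero, mul_zero]
      · rw [POP.pbar_coeff (by omega : a ≤ m)]
        obtain ⟨c, hc⟩ := POP.pbar_even (show a ≠ 0 by omega)
        rw [hc]
        push_cast
        have h8 : (8 : ZMod 8) = 0 := rfl
        linear_combination ((c:ZMod 8) * coeff (R := (ZMod 8)) b POP.KK) * h8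
    have pT : (2:ZMod 8) * (coeff (R := (ZMod 8)) m (POP.PbA (ZMod 8) m * POP.T2)
        + coeff (R := (ZMod 8)) m (POP.PbA (ZMod 8) m * POP.T4)) = 0 := by
      apply POP.two_mul_zero_of_cast4
      set φ := ZMod.castHom (by norm_num : (4:ℕ) ∣ 8) (ZMod 4) with hφ
      rw [PowerSeries.coeff_mul, PowerSeries.coeff_mul, ← Finset.sum_add_distrib, map_sum]
      apply Finset.sum_eq_zero
      rintro ⟨a,b⟩ hab
      rw [Finset.HasAntidiagonal.mem_antidiagonal] at hab
      rw [map_add, map_mul, map_mul, POP.pbar_coeff (by omega : a ≤ m),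
        POP.coeff_T2, POP.coeff_T4, map_intCast, apply_ite φ, apply_ite φ,
        map_one, map_zero]
      by_cases hb2 : 2 ∣ b ∧ b ≠ 0
      · have haodd : a % 2 = 1 := by
          obtain ⟨⟨u,hu⟩, h0⟩ := hb2
          omega
        rw [POP.pbar_mod4 haodd, if_pos hb2]
        by_cases hb4 : 4 ∣ b ∧ b ≠ 0
        · rw [if_pos hb4]
          split_ifs <;> decide
        · rw [if_neg hb4]
          have ha4 : a % 4 = 3 := by
            obtain ⟨⟨u,hu⟩, h0⟩ := hb2
            have hnb4 : ¬ (4 ∣ b) := fun hd => hb4 ⟨hd, h0⟩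
            omega
          have hnsq : ¬ IsSquare a := by
            rintro ⟨t2, ht2⟩
            have hts : t2^2 = a := by rw [ht2]; ring
            have := POP.sq_mod4 t2
            omega
          rw [if_neg hnsq]
          ring
      · have hb4 : ¬ (4 ∣ b ∧ b ≠ 0) := by
          rintro ⟨hd, h0⟩
          exact hb2 ⟨dvd_trans ⟨2, rfl⟩ hd, h0⟩
        rw [if_neg hb2, if_neg hb4]
        ring
    rw [p0, pT, pK]
    simp
  have hdvd : (8:ℤ) ∣ plbark 5 m := by
    have := (ZMod.intCast_zmod_eq_zero_iff_dvd (plbark 5 m) 8).mp hzero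
    exact_mod_cast this
  exact Int.modEq_zero_iff_dvd.mpr hdvd
end
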